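/- Let M_1 and M_2 be distinct cuts of G having at least two common edges. Then at least one of M_1 and M_2 is not a maximal cut, i.e. it can be complemented by some edge of G. -/

import Mathlib

namespace Paper

variable {V : Type*}

/-- `S ⊆ V(G)` is a cutset of `G`: the graph `G − S` is disconnected. -/
def IsCutset (G : SimpleGraph V) (S : Set V) : Prop :=
  ¬ (G.induce (Sᶜ : Set V)).Connected

/-- A 3-cutset: a cutset of exactly 3 vertices. -/
def IsThreeCutset (G : SimpleGraph V) (S : Set V) : Prop :=
  S.ncard = 3 ∧ IsCutset G S

/-- `G` is triconnected: at least 4 vertices and deleting any at most 2 vertices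
leaves a connected graph. -/
def IsTriconnected [Fintype V] (G : SimpleGraph V) : Prop :=
  4 ≤ Fintype.card V ∧
    ∀ X : Set V, X.ncard ≤ 2 → (G.induce (Xᶜ : Set V)).Connected

/-- `x` and `y` both survive the deletion of `R` and lie in the same connected
component of `G − R`. -/
def ReachOutside (G : SimpleGraph V) (R : Set V) (x y : V) : Prop :=
  ∃ (hx : x ∈ (Rᶜ : Set V)) (hy : y ∈ (Rᶜ : Set V)),
    (G.induce (Rᶜ : Set V)).Reachable ⟨x, hx⟩ ⟨y, hy⟩

/-- `R` splits `X`: two vertices of `X \ R` lie in different connected components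
of `G − R`. -/
def Splits (G : SimpleGraph V) (R X : Set V) : Prop :=
  ∃ x ∈ X, ∃ y ∈ X, x ∉ R ∧ y ∉ R ∧ ¬ ReachOutside G R x y

/-- Two 3-cutsets are dependent iff one splits the other. -/
def Dependent (G : SimpleGraph V) (S T : Set V) : Prop :=
  Splits G S T ∨ Splits G T S

/-- The connected component of `G − R` containing `u` (empty if `u ∈ R`). -/
def compOutside (G : SimpleGraph V) (R : Set V) (u : V) : Set V :=
  {y | ReachOutside G R u y}

/-- `C` is a connected component of `G − R`. -/
def IsCompOutside (G : SimpleGraph V) (R : Set V) (C : Set V) : Prop :=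
  ∃ u, u ∉ R ∧ C = compOutside G R u

/-- The graph obtained from `G` by deleting the vertices of `A` (with all incident
edges) and the edges of `E`. -/
def DelVE (G : SimpleGraph V) (A : Set V) (E : Set (Sym2 V)) : SimpleGraph (Aᶜ : Set V) :=
  (G.deleteEdges E).induce (Aᶜ : Set V)

/-- The mixed set of vertices `A` and edges `E` disconnects `G`. -/
def CutVE (G : SimpleGraph V) (A : Set V) (E : Set (Sym2 V)) : Prop :=
  ¬ (DelVE G A E).Connected

/-- `x` and `y` survive the deletion and lie in the same connected component of
the graph obtained by deleting the vertices of `A` and the edges of `E`. -/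
def ReachVE (G : SimpleGraph V) (A : Set V) (E : Set (Sym2 V)) (x y : V) : Prop :=
  ∃ (hx : x ∈ (Aᶜ : Set V)) (hy : y ∈ (Aᶜ : Set V)),
    (DelVE G A E).Reachable ⟨x, hx⟩ ⟨y, hy⟩

/-- The connected component of `G − (A ∪ E)` containing `u`. -/
def compVE (G : SimpleGraph V) (A : Set V) (E : Set (Sym2 V)) (u : V) : Set V :=
  {y | ReachVE G A E u y}

/-- `C` is a connected component of the graph obtained from `G` by deleting the
vertices of `A` and the edges of `E`. -/
def IsCompVE (G : SimpleGraph V) (A : Set V) (E : Set (Sym2 V)) (C : Set V) : Prop :=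
  ∃ u, u ∉ A ∧ C = compVE G A E u

/-- The cut `(A, E)` can be complemented by some edge of `G`. -/
def CanComplement (G : SimpleGraph V) (A : Set V) (E : Set (Sym2 V)) : Prop :=
  ∃ x ∈ A, ∃ y : V, G.Adj x y ∧ CutVE G (A \ {x}) (insert s(x, y) E)

open SimpleGraph

/-- All edges meeting the vertex set `S`. -/
def starS (S : Set V) : Set (Sym2 V) := {ε | ∃ s ∈ S, s ∈ ε}

lemma mem_starS {S : Set V} {u v : V} : s(u,v) ∈ starS S ↔ u ∈ S ∨ v ∈ S := by
  constructor
  · rintro ⟨s, hs, hmem⟩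
    rcases Sym2.mem_iff.1 hmem with rfl | rfl
    · exact Or.inl hs
    · exact Or.inr hs
  · rintro (h | h)
    · exact ⟨u, h, Sym2.mem_mk_left _ _⟩
    · exact ⟨v, h, Sym2.mem_mk_right _ _⟩

lemma sym2_cancel {t y z : V} (h : s(t,y) = s(z,y)) (hty : t ≠ y) : t = z := by
  rcases Sym2.eq_iff.1 h with ⟨h1, _⟩ | ⟨h1, h2⟩
  · exact h1
  · exact absurd h1 hty

/-- Walk transfer along a closed set. -/
lemma reach_mono {H₁ H₂ : SimpleGraph V} {Z : Set V}
    (hcl : ∀ u v, u ∈ Z → H₁.Adj u v → v ∈ Z)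
    (hadj : ∀ u v, u ∈ Z → v ∈ Z → H₁.Adj u v → H₂.Adj u v)
    {x w : V} (hx : x ∈ Z) (h : H₁.Reachable x w) :
    H₂.Reachable x w ∧ w ∈ Z := by
  obtain ⟨p⟩ := h
  induction p with
  | nil => exact ⟨Reachable.refl _, hx⟩
  | @cons a b c hab p ih =>
      have hb : b ∈ Z := hcl a b hx hab
      obtain ⟨hr, hc⟩ := ih hb
      exact ⟨(hadj a b hx hb hab).reachable.trans hr, hc⟩

lemma reach_closed {H : SimpleGraph V} {Z : Set V}
    (hcl : ∀ u v, u ∈ Z → H.Adj u v → v ∈ Z)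
    {x w : V} (hx : x ∈ Z) (h : H.Reachable x w) : w ∈ Z :=
  (reach_mono hcl (fun _ _ _ _ ha => ha) hx h).2

lemma reach_of_induce {H : SimpleGraph V} {A : Set V} {x y : V}
    (hx : x ∈ (Aᶜ : Set V)) (hy : y ∈ (Aᶜ : Set V))
    (h : (H.induce (Aᶜ : Set V)).Reachable ⟨x, hx⟩ ⟨y, hy⟩) :
    (H.deleteEdges (starS A)).Reachable x y := by
  obtain ⟨p⟩ := h
  have key : ∀ (u v : (Aᶜ : Set V)), (H.induce (Aᶜ : Set V)).Walk u v →
      (H.deleteEdges (starS A)).Reachable u.1 v.1 := by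
    intro u v p
    induction p with
    | nil => exact Reachable.refl _
    | @cons a b c hab p ih =>
        have hadj : H.Adj a.1 b.1 := hab
        have hmem : s(a.1, b.1) ∉ starS A := by
          rw [mem_starS]
          rintro (h | h)
          · exact a.2 h
          · exact b.2 h
        exact (SimpleGraph.deleteEdges_adj.2 ⟨hadj, hmem⟩).reachable.trans ih
  exact key _ _ p

lemma reach_to_induce {H : SimpleGraph V} {A : Set V} {x y : V}
    (hx : x ∈ (Aᶜ : Set V))
    (h : (H.deleteEdges (starS A)).Reachable x y) :
    ∃ (hy : y ∈ (Aᶜ : Set V)), (H.induce (Aᶜ : Set V)).Reachable ⟨x, hx⟩ ⟨y, hy⟩ := by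
  obtain ⟨p⟩ := h
  induction p with
  | nil => exact ⟨hx, Reachable.refl _⟩
  | @cons a b c hab p ih =>
      obtain ⟨hadj, hmem⟩ := SimpleGraph.deleteEdges_adj.1 hab
      have hbA : b ∈ (Aᶜ : Set V) := by
        intro hb
        exact hmem (mem_starS.2 (Or.inr hb))
      obtain ⟨hy, hr⟩ := ih hbA
      refine ⟨hy, ?_⟩
      have hadj' : (H.induce (Aᶜ : Set V)).Adj ⟨a, hx⟩ ⟨b, hbA⟩ := hadj
      exact hadj'.reachable.trans hr

/-- No separator of size ≤ 2. -/
lemma no_sep2 [Fintype V] {G : SimpleGraph V} (htri : IsTriconnected G)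
    {S Z : Set V} (hS : S.ncard ≤ 2)
    (hZS : ∀ z ∈ Z, z ∉ S)
    (hcl : ∀ z ∈ Z, ∀ t, G.Adj z t → t ∈ Z ∨ t ∈ S)
    {z₀ w₀ : V} (hz : z₀ ∈ Z) (hw : w₀ ∉ Z) (hwS : w₀ ∉ S) : False := by
  have hconn := htri.2 S hS
  have hz' : z₀ ∈ (Sᶜ : Set V) := hZS _ hz
  have hw' : w₀ ∈ (Sᶜ : Set V) := hwS
  have hr := hconn.preconnected ⟨z₀, hz'⟩ ⟨w₀, hw'⟩
  have hr' := reach_of_induce hz' hw' hr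
  have hcl' : ∀ u v, u ∈ Z → (G.deleteEdges (starS S)).Adj u v → v ∈ Z := by
    intro u v hu ha
    obtain ⟨hadj, hmem⟩ := SimpleGraph.deleteEdges_adj.1 ha
    rcases hcl u hu v hadj with h | h
    · exact h
    · exact absurd (mem_starS.2 (Or.inr h)) hmem
  exact hw (reach_mono hcl' (fun _ _ _ _ ha => ha) hz hr').2

/-- Minimum degree ≥ 3. -/
lemma mindeg3 [Fintype V] {G : SimpleGraph V} (htri : IsTriconnected G)
    {w : V} {T : Set V} (hT : T.ncard ≤ 2)
    (hnb : ∀ t, G.Adj w t → t ∈ T) : False := by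
  classical
  have hS : (T \ {w}).ncard ≤ 2 :=
    le_trans (Set.ncard_le_ncard Set.diff_subset (Set.toFinite _)) hT
  have hcard : (T ∪ {w}).ncard ≤ 3 := by
    have h1 := Set.ncard_union_le T ({w} : Set V)
    have h2 : ({w} : Set V).ncard = 1 := Set.ncard_singleton w
    omega
  have hex : ∃ u, u ∉ T ∪ {w} := by
    by_contra hno
    push_neg at hno
    have huniv : (Set.univ : Set V) ⊆ T ∪ {w} := fun u _ => hno u
    have := Set.ncard_le_ncard huniv (Set.toFinite _)
    rw [Set.ncard_univ] at this
    have h4 := htri.1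
    simp only [Nat.card_eq_fintype_card] at this
    omega
  obtain ⟨u, hu⟩ := hex
  have hwS : w ∉ T \ {w} := fun h => h.2 rfl
  have huS : u ∉ T \ {w} := fun h => hu (Or.inl h.1)
  have hconn := htri.2 (T \ {w}) hS
  have hr := hconn.preconnected ⟨w, hwS⟩ ⟨u, huS⟩
  have hr' := reach_of_induce (A := T \ {w}) hwS huS hr
  have hcl : ∀ a b, a ∈ ({w} : Set V) → (G.deleteEdges (starS (T \ {w}))).Adj a b →
      b ∈ ({w} : Set V) := by
    intro a b haw ha
    have haw' : a = w := haw
    rw [haw'] at ha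
    show b = w
    obtain ⟨hadj, hmem⟩ := SimpleGraph.deleteEdges_adj.1 ha
    have hbT : b ∈ T := hnb b hadj
    by_cases hbw : b = w
    · exact hbw
    · have hin : s(w,b) ∈ starS (T \ {w}) := mem_starS.2 (Or.inr ⟨hbT, hbw⟩)
      exact absurd hin hmem
  have := (reach_mono hcl (fun _ _ _ _ ha => ha) rfl hr').2
  exact hu (Or.inr this)

lemma mindeg3' [Fintype V] {G : SimpleGraph V} (htri : IsTriconnected G)
    {y c₁ c₂ : V} (hnb : ∀ t, G.Adj y t → t = c₁ ∨ t = c₂ ∨ t = y) : False := by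
  refine mindeg3 htri (w := y) (T := {c₁, c₂}) ?_ ?_
  · have h1 : ({c₁, c₂} : Set V).ncard ≤ ({c₂} : Set V).ncard + 1 := Set.ncard_insert_le _ _
    have h2 : ({c₂} : Set V).ncard = 1 := Set.ncard_singleton _
    omega
  · intro t ht
    rcases hnb t ht with h | h | h
    · exact Or.inl h
    · exact Or.inr h
    · exact absurd h.symm ht.ne

/-- A walk reaching a vertex `a` from `x ≠ a` provides an edge at `a` whose other
endpoint is reachable from `x` avoiding `a`. -/
lemma attach {G : SimpleGraph V} {D : Set (Sym2 V)} {a x : V} (hx : x ≠ a)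
    (h : (G.deleteEdges D).Reachable x a) :
    ∃ p, p ≠ a ∧ (G.deleteEdges D).Adj a p ∧
      (G.deleteEdges (D ∪ starS {a})).Reachable x p := by
  obtain ⟨w⟩ := h
  suffices key : ∀ (u y : V) (w : (G.deleteEdges D).Walk u y), y = a → u ≠ a →
      ∃ p, p ≠ a ∧ (G.deleteEdges D).Adj a p ∧
        (G.deleteEdges (D ∪ starS {a})).Reachable u p by
    exact key x a w rfl hx
  intro u y w
  induction w with
  | nil =>
      intro hya hu
      exact absurd hya hu
  | @cons u m c hum p ih =>
      intro hya hu
      by_cases hma : m = a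
      · subst hma
        exact ⟨u, hu, hum.symm, Reachable.refl _⟩
      · obtain ⟨q, hq, hadj, hr⟩ := ih hya hma
        refine ⟨q, hq, hadj, ?_⟩
        have hadj' : (G.deleteEdges (D ∪ starS {a})).Adj u m := by
          obtain ⟨hGadj, hmem⟩ := SimpleGraph.deleteEdges_adj.1 hum
          refine SimpleGraph.deleteEdges_adj.2 ⟨hGadj, ?_⟩
          intro hin
          rcases hin with hin | hin
          · exact hmem hin
          · rcases mem_starS.1 hin with h' | h'
            · exact hu h'
            · exact hma h'
        exact hadj'.reachable.trans hr

/-- Contribution of a possibly-crossing edge `e` to the boundary of `Z`. -/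
lemma edge_contrib {Z : Set V} (e : Sym2 V) :
    ∃ oe : Set V, oe.ncard ≤ 1 ∧ (∀ w ∈ oe, w ∉ Z ∧ ∃ z ∈ Z, s(z,w) = e) ∧
      (∀ z t, z ∈ Z → t ∉ Z → s(z,t) = e → t ∈ oe) := by
  classical
  obtain ⟨⟨a, b⟩, rfl⟩ := Quot.exists_rep e
  show ∃ oe : Set V, oe.ncard ≤ 1 ∧ (∀ w ∈ oe, w ∉ Z ∧ ∃ z ∈ Z, s(z,w) = s(a,b)) ∧
      (∀ z t, z ∈ Z → t ∉ Z → s(z,t) = s(a,b) → t ∈ oe)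
  by_cases ha : a ∈ Z <;> by_cases hb : b ∈ Z
  · refine ⟨∅, by simp, by simp, ?_⟩
    intro z t hz ht heq
    rcases Sym2.eq_iff.1 heq with ⟨h1, h2⟩ | ⟨h1, h2⟩
    · rw [h2] at ht; exact absurd hb ht
    · rw [h2] at ht; exact absurd ha ht
  · refine ⟨{b}, by simp, ?_, ?_⟩
    · intro w hw
      have hw' : w = b := hw
      subst hw'
      exact ⟨hb, a, ha, rfl⟩
    · intro z t hz ht heq
      rcases Sym2.eq_iff.1 heq with ⟨h1, h2⟩ | ⟨h1, h2⟩
      · exact h2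
      · rw [h1] at hz; exact absurd hz hb
  · refine ⟨{a}, by simp, ?_, ?_⟩
    · intro w hw
      have hw' : w = a := hw
      subst hw'
      exact ⟨ha, b, hb, Sym2.eq_swap⟩
    · intro z t hz ht heq
      rcases Sym2.eq_iff.1 heq with ⟨h1, h2⟩ | ⟨h1, h2⟩
      · rw [h1] at hz; exact absurd hz ha
      · exact h2
  · refine ⟨∅, by simp, by simp, ?_⟩
    intro z t hz ht heq
    rcases Sym2.eq_iff.1 heq with ⟨h1, h2⟩ | ⟨h1, h2⟩
    · rw [h1] at hz; exact absurd hz ha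
    · rw [h1] at hz; exact absurd hz hb

lemma ne_of_reach_star {G : SimpleGraph V} {D : Set (Sym2 V)} {a x y : V} (hx : x ≠ a)
    (h : (G.deleteEdges (D ∪ starS {a})).Reachable x y) : y ≠ a := by
  have hcl : ∀ u w, u ∈ {t : V | t ≠ a} → (G.deleteEdges (D ∪ starS {a})).Adj u w →
      w ∈ {t : V | t ≠ a} := by
    intro u w hu hadj
    obtain ⟨hGadj, hmem⟩ := SimpleGraph.deleteEdges_adj.1 hadj
    intro hwa
    exact hmem (Or.inr (mem_starS.2 (Or.inr (by rw [hwa]; exact rfl))))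
  exact reach_closed hcl hx h

lemma memD {e f : Sym2 V} {a z t : V}
    (h : s(z,t) ∈ ({e, f} : Set (Sym2 V)) ∪ starS {a}) :
    s(z,t) = e ∨ s(z,t) = f ∨ z = a ∨ t = a := by
  rcases h with h | h
  · rcases h with h | h
    · exact Or.inl h
    · exact Or.inr (Or.inl h)
  · rcases mem_starS.1 h with h | h
    · exact Or.inr (Or.inr (Or.inl h))
    · exact Or.inr (Or.inr (Or.inr h))

lemma mem_of_not_adj {G : SimpleGraph V} {D : Set (Sym2 V)} {z t : V}
    (hG : G.Adj z t) (hnadj : ¬ (G.deleteEdges D).Adj z t) : s(z,t) ∈ D := by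
  by_contra hmem
  exact hnadj (SimpleGraph.deleteEdges_adj.2 ⟨hG, hmem⟩)

/-- Crossing claim for a vertex unit: if `G − a − {e,f}` is disconnected
(witnessed by `v, y`), then `e` crosses the boundary of the component of `v`. -/
lemma claimV [Fintype V] {G : SimpleGraph V} (htri : IsTriconnected G)
    {e f : Sym2 V} {a v y : V}
    (hv : v ≠ a) (hy : y ≠ a)
    (hvy : ¬ (G.deleteEdges (({e, f} : Set (Sym2 V)) ∪ starS {a})).Reachable v y) :
    ∃ p q, e = s(p,q) ∧
      (G.deleteEdges (({e, f} : Set (Sym2 V)) ∪ starS {a})).Reachable v p ∧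
      ¬ (G.deleteEdges (({e, f} : Set (Sym2 V)) ∪ starS {a})).Reachable v q ∧ q ≠ a := by
  classical
  set Kd := G.deleteEdges (({e, f} : Set (Sym2 V)) ∪ starS {a}) with hKd
  set Z : Set V := {w | Kd.Reachable v w} with hZdef
  by_contra hno
  have hvZ : v ∈ Z := Reachable.refl v
  have haZ : a ∉ Z := fun h => ne_of_reach_star hv h rfl
  have hyZ : y ∉ Z := hvy
  have hZcl : ∀ u t, u ∈ Z → Kd.Adj u t → t ∈ Z := fun u t hu h => Reachable.trans hu h.reachable
  obtain ⟨of, hof1, hof2, hof3⟩ := edge_contrib (Z := Z) f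
  have hcross : ∀ z t, z ∈ Z → t ∉ Z → s(z,t) = e → t = a := by
    intro z t hz ht heq
    by_cases hta : t = a
    · exact hta
    · exact absurd ⟨z, t, heq.symm, hz, ht, hta⟩ hno
  have hScard : (({a} : Set V) ∪ of).ncard ≤ 2 := by
    have h1 := Set.ncard_union_le ({a} : Set V) of
    have h2 : ({a} : Set V).ncard = 1 := Set.ncard_singleton a
    omega
  by_cases hout : ∃ w₀, w₀ ∉ Z ∧ w₀ ∉ ({a} : Set V) ∪ of
  · obtain ⟨w₀, hw1, hw2⟩ := hout
    refine no_sep2 htri hScard ?_ ?_ hvZ hw1 hw2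
    · intro z hz hmem
      rcases hmem with hmem | hmem
      · exact haZ (by rwa [show z = a from hmem] at hz)
      · exact (hof2 z hmem).1 hz
    · intro z hz t hGadj
      by_cases htZ : t ∈ Z
      · exact Or.inl htZ
      · have hnadj : ¬ Kd.Adj z t := fun h => htZ (hZcl _ _ hz h)
        have hmem := mem_of_not_adj hGadj hnadj
        rcases memD hmem with h | h | h | h
        · exact Or.inr (Or.inl (by rw [hcross z t hz htZ h]; exact rfl))
        · exact Or.inr (Or.inr (hof3 z t hz htZ h))
        · exact absurd (by rwa [h] at hz) haZ
        · exact Or.inr (Or.inl (by rw [h]; exact rfl))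
  · push_neg at hout
    have hyof : y ∈ of := by
      rcases hout y hyZ with h | h
      · exact absurd h hy
      · exact h
    obtain ⟨hyZ', z_f, hzf, heqf⟩ := hof2 y hyof
    refine mindeg3' htri (y := y) (c₁ := z_f) (c₂ := a) ?_
    intro t ht
    by_cases htZ : t ∈ Z
    · have hnadj : ¬ Kd.Adj t y := fun h => hyZ (hZcl _ _ htZ h)
      have hmem := mem_of_not_adj ht.symm hnadj
      rcases memD hmem with h | h | h | h
      · exact absurd (hcross t y htZ hyZ h) hy
      · exact Or.inl (sym2_cancel (h.trans heqf.symm) (Ne.symm ht.ne))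
      · exact absurd (by rwa [h] at htZ) haZ
      · exact absurd h hy
    · rcases hout t htZ with h | h
      · exact Or.inr (Or.inl h)
      · exact Or.inr (Or.inr ((Set.ncard_le_one (Set.toFinite _)).1 hof1 t h y hyof))

/-- Endgame for the edge-unit crossing claim. -/
lemma endgameE [Fintype V] {G : SimpleGraph V} (htri : IsTriconnected G)
    {e f g : Sym2 V} {D : Set (Sym2 V)} {v y : V} {og : Set V}
    (hD : ∀ z t : V, s(z,t) ∈ D → s(z,t) = e ∨ s(z,t) = f ∨ s(z,t) = g)
    (hvy : ¬ (G.deleteEdges D).Reachable v y)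
    (hcross : ∀ z t, (G.deleteEdges D).Reachable v z → ¬ (G.deleteEdges D).Reachable v t →
      s(z,t) = e → False)
    (hyof : ∃ z_f, (G.deleteEdges D).Reachable v z_f ∧ s(z_f, y) = f)
    (hog1 : og.ncard ≤ 1)
    (hog2 : ∀ w ∈ og, ¬ (G.deleteEdges D).Reachable v w ∧
      ∃ z, (G.deleteEdges D).Reachable v z ∧ s(z,w) = g)
    (hog3 : ∀ z t, (G.deleteEdges D).Reachable v z → ¬ (G.deleteEdges D).Reachable v t →
      s(z,t) = g → t ∈ og)
    (hout : ∀ t, ¬ (G.deleteEdges D).Reachable v t → t = y ∨ t ∈ og) : False := by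
  classical
  obtain ⟨z_f, hzf, heqf⟩ := hyof
  have main : ∀ (c : V), (∀ t, (G.deleteEdges D).Reachable v t → G.Adj y t →
      s(t,y) = g → t = c) → (∀ t, t ∈ og → t = c ∨ t = y) → False := by
    intro c hgcase hogcase
    refine mindeg3' htri (y := y) (c₁ := z_f) (c₂ := c) ?_
    intro t ht
    by_cases htZ : (G.deleteEdges D).Reachable v t
    · have hnadj : ¬ (G.deleteEdges D).Adj t y := fun h => hvy (htZ.trans h.reachable)
      have hmem := mem_of_not_adj ht.symm hnadj
      rcases hD t y hmem with h | h | h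
      · exact (hcross t y htZ hvy h).elim
      · exact Or.inl (sym2_cancel (h.trans heqf.symm) (Ne.symm ht.ne))
      · exact Or.inr (Or.inl (hgcase t htZ ht h))
    · rcases hout t htZ with h | h
      · exact Or.inr (Or.inr h)
      · rcases hogcase t h with h' | h'
        · exact Or.inr (Or.inl h')
        · exact Or.inr (Or.inr h')
  by_cases hyog : y ∈ og
  · obtain ⟨_, z_g, hzg, heqg⟩ := hog2 y hyog
    refine main z_g ?_ ?_
    · intro t htZ ht h
      exact sym2_cancel (h.trans heqg.symm) (Ne.symm ht.ne)
    · intro t htog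
      exact Or.inr ((Set.ncard_le_one (Set.toFinite _)).1 hog1 t htog y hyog)
  · rcases Set.eq_empty_or_nonempty og with hogE | ⟨w, hwog⟩
    · refine main z_f ?_ ?_
      · intro t htZ ht h
        exact absurd (hog3 t y htZ hvy h) (by rw [hogE]; exact fun h' => h')
      · intro t htog
        rw [hogE] at htog
        exact absurd htog (Set.notMem_empty t)
    · refine main w ?_ ?_
      · intro t htZ ht h
        exact absurd (hog3 t y htZ hvy h) hyog
      · intro t htog
        exact Or.inl ((Set.ncard_le_one (Set.toFinite _)).1 hog1 t htog w hwog)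

/-- Crossing claim for an edge unit. -/
lemma claimE [Fintype V] {G : SimpleGraph V} (htri : IsTriconnected G)
    {e f g : Sym2 V} {D : Set (Sym2 V)} {v y : V}
    (hD : ∀ z t : V, s(z,t) ∈ D → s(z,t) = e ∨ s(z,t) = f ∨ s(z,t) = g)
    (hvy : ¬ (G.deleteEdges D).Reachable v y) :
    ∃ p q, e = s(p,q) ∧ (G.deleteEdges D).Reachable v p ∧
      ¬ (G.deleteEdges D).Reachable v q := by
  classical
  set Kd := G.deleteEdges D with hKd
  set Z : Set V := {w | Kd.Reachable v w} with hZdef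
  by_contra hno
  have hvZ : v ∈ Z := Reachable.refl v
  have hyZ : y ∉ Z := hvy
  have hZcl : ∀ u t, u ∈ Z → Kd.Adj u t → t ∈ Z := fun u t hu h => Reachable.trans hu h.reachable
  obtain ⟨of, hof1, hof2, hof3⟩ := edge_contrib (Z := Z) f
  obtain ⟨og, hog1, hog2, hog3⟩ := edge_contrib (Z := Z) g
  have hcross : ∀ z t, z ∈ Z → t ∉ Z → s(z,t) = e → False := by
    intro z t hz ht heq
    exact hno ⟨z, t, heq.symm, hz, ht⟩
  have hScard : (of ∪ og).ncard ≤ 2 := by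
    have h1 := Set.ncard_union_le of og
    omega
  by_cases hout : ∃ w₀, w₀ ∉ Z ∧ w₀ ∉ of ∪ og
  · obtain ⟨w₀, hw1, hw2⟩ := hout
    refine no_sep2 htri hScard ?_ ?_ hvZ hw1 hw2
    · intro z hz hmem
      rcases hmem with hmem | hmem
      · exact (hof2 z hmem).1 hz
      · exact (hog2 z hmem).1 hz
    · intro z hz t hGadj
      by_cases htZ : t ∈ Z
      · exact Or.inl htZ
      · have hnadj : ¬ Kd.Adj z t := fun h => htZ (hZcl _ _ hz h)
        have hmem := mem_of_not_adj hGadj hnadj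
        rcases hD z t hmem with h | h | h
        · exact (hcross z t hz htZ h).elim
        · exact Or.inr (Or.inl (hof3 z t hz htZ h))
        · exact Or.inr (Or.inr (hog3 z t hz htZ h))
  · push_neg at hout
    have hyofog : y ∈ of ∪ og := hout y hyZ
    rcases hyofog with hyof | hyog
    · obtain ⟨_, z_f, hzf, heqf⟩ := hof2 y hyof
      refine endgameE htri hD hvy hcross ⟨z_f, hzf, heqf⟩ hog1 hog2 hog3 ?_
      intro t htZ
      rcases hout t htZ with h | h
      · exact Or.inl ((Set.ncard_le_one (Set.toFinite _)).1 hof1 t h y hyof)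
      · exact Or.inr h
    · obtain ⟨_, z_g, hzg, heqg⟩ := hog2 y hyog
      refine endgameE htri (f := g) (g := f) (og := of)
        (fun z t h => by rcases hD z t h with h | h | h
                         · exact Or.inl h
                         · exact Or.inr (Or.inr h)
                         · exact Or.inr (Or.inl h))
        hvy hcross ⟨z_g, hzg, heqg⟩ hof1 hof2 hof3 ?_
      intro t htZ
      rcases hout t htZ with h | h
      · exact Or.inr h
      · exact Or.inl ((Set.ncard_le_one (Set.toFinite _)).1 hog1 t h y hyog)

lemma splice {H H' : SimpleGraph V} {c d : V}
    (hle : ∀ u w, H'.Adj u w → H.Adj u w)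
    (hdiff : ∀ u w, H.Adj u w → H'.Adj u w ∨ s(u,w) = s(c,d))
    (hcd : H'.Reachable c d) : ∀ u w, H.Reachable u w → H'.Reachable u w := by
  intro u w h
  obtain ⟨p⟩ := h
  induction p with
  | nil => exact Reachable.refl _
  | @cons a b c' hab p ih =>
      refine Reachable.trans ?_ ih
      rcases hdiff a b hab with h | h
      · exact h.reachable
      · rcases Sym2.eq_iff.1 h with ⟨h1, h2⟩ | ⟨h1, h2⟩
        · rw [h1, h2]; exact hcd
        · rw [h1, h2]; exact hcd.symm

/-- Structure of a vertex-unit cut: exactly two components, both `e` and `f`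
crossing between them. -/
lemma structV [Fintype V] {G : SimpleGraph V} (htri : IsTriconnected G)
    {e f : Sym2 V} {a x y : V} (hx : x ≠ a) (hy : y ≠ a)
    (hxy : ¬ (G.deleteEdges (({e, f} : Set (Sym2 V)) ∪ starS {a})).Reachable x y) :
    ∃ e₁ e₂ f₁ f₂ : V, e = s(e₁,e₂) ∧ f = s(f₁,f₂) ∧
      ¬ (G.deleteEdges (({e, f} : Set (Sym2 V)) ∪ starS {a})).Reachable e₁ e₂ ∧
      (G.deleteEdges (({e, f} : Set (Sym2 V)) ∪ starS {a})).Reachable e₁ f₁ ∧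
      (G.deleteEdges (({e, f} : Set (Sym2 V)) ∪ starS {a})).Reachable e₂ f₂ ∧
      e₁ ≠ a ∧ e₂ ≠ a ∧ f₁ ≠ a ∧ f₂ ≠ a ∧
      (∀ w, w ≠ a → (G.deleteEdges (({e, f} : Set (Sym2 V)) ∪ starS {a})).Reachable e₁ w ∨
        (G.deleteEdges (({e, f} : Set (Sym2 V)) ∪ starS {a})).Reachable e₂ w) := by
  classical
  have hEq : G.deleteEdges (({f, e} : Set (Sym2 V)) ∪ starS {a}) =
      G.deleteEdges (({e, f} : Set (Sym2 V)) ∪ starS {a}) := by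
    rw [Set.pair_comm]
  obtain ⟨e₁, e₂, hee, hre1, hnre2, he2a⟩ := claimV htri hx hy hxy
  have he1a : e₁ ≠ a := ne_of_reach_star hx hre1
  have hne12 : ¬ (G.deleteEdges (({e, f} : Set (Sym2 V)) ∪ starS {a})).Reachable e₁ e₂ :=
    fun h => hnre2 (hre1.trans h)
  obtain ⟨f₁, f₂, hff, hrf1, hnrf2, hf2a⟩ := claimV (e := f) (f := e) htri hx hy
    (by rw [hEq]; exact hxy)
  rw [hEq] at hrf1 hnrf2
  have hf1a : f₁ ≠ a := ne_of_reach_star hx hrf1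
  have href1 : (G.deleteEdges (({e, f} : Set (Sym2 V)) ∪ starS {a})).Reachable e₁ f₁ :=
    hre1.symm.trans hrf1
  -- f crosses the component of e₂
  have hne2x : ¬ (G.deleteEdges (({e, f} : Set (Sym2 V)) ∪ starS {a})).Reachable e₂ x :=
    fun h => hnre2 h.symm
  obtain ⟨r, s', hfr, hrr, hnrs, hsa⟩ := claimV (e := f) (f := e) htri he2a hx
    (by rw [hEq]; exact hne2x)
  rw [hEq] at hrr hnrs
  have href2 : (G.deleteEdges (({e, f} : Set (Sym2 V)) ∪ starS {a})).Reachable e₂ f₂ := by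
    rcases Sym2.eq_iff.1 (hfr.symm.trans hff) with ⟨h1, h2⟩ | ⟨h1, h2⟩
    · exfalso
      rw [h1] at hrr
      exact hne12 (href1.trans hrr.symm)
    · rw [h1] at hrr
      exact hrr
  refine ⟨e₁, e₂, f₁, f₂, hee, hff, hne12, href1, href2, he1a, he2a, hf1a, hf2a, ?_⟩
  intro w hwa
  by_contra hc
  push_neg at hc
  obtain ⟨hc1, hc2⟩ := hc
  have hnwe1 : ¬ (G.deleteEdges (({e, f} : Set (Sym2 V)) ∪ starS {a})).Reachable w e₁ :=
    fun h => hc1 h.symm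
  obtain ⟨p, q, hpq, hrp, hnrq, hqa⟩ := claimV htri hwa he1a hnwe1
  rcases Sym2.eq_iff.1 (hpq.symm.trans hee) with ⟨h1, h2⟩ | ⟨h1, h2⟩
  · rw [h1] at hrp; exact hc1 hrp.symm
  · rw [h1] at hrp; exact hc2 hrp.symm

/-- Structure of an edge-unit cut. -/
lemma structE [Fintype V] {G : SimpleGraph V} (htri : IsTriconnected G)
    {e f g : Sym2 V} {x y : V}
    (hge : g ≠ e) (hgf : g ≠ f) (hgE : g ∈ G.edgeSet)
    (hK : ∀ u w : V, (G.deleteEdges ({e, f} : Set (Sym2 V))).Reachable u w)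
    (hxy : ¬ (G.deleteEdges ({e, f, g} : Set (Sym2 V))).Reachable x y) :
    ∃ e₁ e₂ f₁ f₂ g₁ g₂ : V, e = s(e₁,e₂) ∧ f = s(f₁,f₂) ∧ g = s(g₁,g₂) ∧
      ¬ (G.deleteEdges ({e, f, g} : Set (Sym2 V))).Reachable e₁ e₂ ∧
      (G.deleteEdges ({e, f, g} : Set (Sym2 V))).Reachable e₁ f₁ ∧
      (G.deleteEdges ({e, f, g} : Set (Sym2 V))).Reachable e₂ f₂ ∧
      (G.deleteEdges ({e, f, g} : Set (Sym2 V))).Reachable e₁ g₁ ∧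
      (G.deleteEdges ({e, f, g} : Set (Sym2 V))).Reachable e₂ g₂ ∧
      (∀ w, (G.deleteEdges ({e, f, g} : Set (Sym2 V))).Reachable e₁ w ∨
        (G.deleteEdges ({e, f, g} : Set (Sym2 V))).Reachable e₂ w) := by
  classical
  have hD : ∀ z t : V, s(z,t) ∈ ({e, f, g} : Set (Sym2 V)) →
      s(z,t) = e ∨ s(z,t) = f ∨ s(z,t) = g := by
    intro z t h
    simpa using h
  have hDf : ∀ z t : V, s(z,t) ∈ ({e, f, g} : Set (Sym2 V)) →
      s(z,t) = f ∨ s(z,t) = e ∨ s(z,t) = g := by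
    intro z t h
    rcases hD z t h with h | h | h
    · exact Or.inr (Or.inl h)
    · exact Or.inl h
    · exact Or.inr (Or.inr h)
  obtain ⟨e₁, e₂, hee, hre1, hnre2⟩ := claimE htri hD hxy
  have hne12 : ¬ (G.deleteEdges ({e, f, g} : Set (Sym2 V))).Reachable e₁ e₂ :=
    fun h => hnre2 (hre1.trans h)
  obtain ⟨f₁, f₂, hff, hrf1, hnrf2⟩ := claimE htri hDf hxy
  have href1 := hre1.symm.trans hrf1
  have hne2x : ¬ (G.deleteEdges ({e, f, g} : Set (Sym2 V))).Reachable e₂ x :=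
    fun h => hnre2 h.symm
  obtain ⟨r, s', hfr, hrr, hnrs⟩ := claimE htri hDf hne2x
  have href2 : (G.deleteEdges ({e, f, g} : Set (Sym2 V))).Reachable e₂ f₂ := by
    rcases Sym2.eq_iff.1 (hfr.symm.trans hff) with ⟨h1, h2⟩ | ⟨h1, h2⟩
    · exfalso
      rw [h1] at hrr
      exact hne12 (href1.trans hrr.symm)
    · rw [h1] at hrr
      exact hrr
  have hcov : ∀ w, (G.deleteEdges ({e, f, g} : Set (Sym2 V))).Reachable e₁ w ∨
      (G.deleteEdges ({e, f, g} : Set (Sym2 V))).Reachable e₂ w := by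
    intro w
    by_contra hc
    push_neg at hc
    obtain ⟨hc1, hc2⟩ := hc
    have hnwe1 : ¬ (G.deleteEdges ({e, f, g} : Set (Sym2 V))).Reachable w e₁ :=
      fun h => hc1 h.symm
    obtain ⟨p, q, hpq, hrp, hnrq⟩ := claimE htri hD hnwe1
    rcases Sym2.eq_iff.1 (hpq.symm.trans hee) with ⟨h1, h2⟩ | ⟨h1, h2⟩
    · rw [h1] at hrp; exact hc1 hrp.symm
    · rw [h1] at hrp; exact hc2 hrp.symm
  -- g crosses
  obtain ⟨⟨c, d⟩, hgrep⟩ := Quot.exists_rep g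
  have hgcd : g = s(c,d) := hgrep.symm
  have hgadj : G.Adj c d := by
    rw [← SimpleGraph.mem_edgeSet, ← hgcd]
    exact hgE
  have hncd : ¬ (G.deleteEdges ({e, f, g} : Set (Sym2 V))).Reachable c d := by
    intro hcd
    refine hxy (splice (c := c) (d := d) ?_ ?_ hcd x y (hK x y))
    · intro u w h
      obtain ⟨h1, h2⟩ := SimpleGraph.deleteEdges_adj.1 h
      refine SimpleGraph.deleteEdges_adj.2 ⟨h1, ?_⟩
      intro hm
      exact h2 (by rcases hm with hm | hm
                   · exact Or.inl hm
                   · exact Or.inr (Or.inl hm))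
    · intro u w h
      obtain ⟨h1, h2⟩ := SimpleGraph.deleteEdges_adj.1 h
      by_cases hg' : s(u,w) = g
      · exact Or.inr (by rw [hg', hgcd])
      · refine Or.inl (SimpleGraph.deleteEdges_adj.2 ⟨h1, ?_⟩)
        intro hm
        rcases hm with hm | hm | hm
        · exact h2 (Or.inl hm)
        · exact h2 (Or.inr hm)
        · exact hg' hm
  rcases hcov c with hc1 | hc1
  · have hc2 : (G.deleteEdges ({e, f, g} : Set (Sym2 V))).Reachable e₂ d := by
      rcases hcov d with h | h
      · exact absurd (hc1.symm.trans h) hncd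
      · exact h
    exact ⟨e₁, e₂, f₁, f₂, c, d, hee, hff, hgcd, hne12, href1, href2, hc1, hc2, hcov⟩
  · have hc2 : (G.deleteEdges ({e, f, g} : Set (Sym2 V))).Reachable e₁ d := by
      rcases hcov d with h | h
      · exact h
      · exact absurd (h.symm.trans hc1) (fun h' => hncd h'.symm)
    exact ⟨e₁, e₂, f₁, f₂, d, c, hee, hff, hgcd.trans Sym2.eq_swap, hne12, href1, href2,
      hc2, hc1, hcov⟩

/-- Core of the vertex–vertex case. -/
lemma c_core [Fintype V] {G : SimpleGraph V} (htri : IsTriconnected G)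
    {e f : Sym2 V} {a₁ a₂ e₁ e₂ f₁ f₂ p₁ q₁ p₂ : V}
    (ha : a₁ ≠ a₂)
    (hee : e = s(e₁,e₂)) (hff : f = s(f₁,f₂))
    (h1 : ¬ (G.deleteEdges (({e,f} : Set (Sym2 V)) ∪ starS {a₁})).Reachable e₁ e₂)
    (h3 : (G.deleteEdges (({e,f} : Set (Sym2 V)) ∪ starS {a₁})).Reachable e₂ f₂)
    (he1a : e₁ ≠ a₁) (he2a : e₂ ≠ a₁)
    (hcov1 : ∀ w, w ≠ a₁ →
      (G.deleteEdges (({e,f} : Set (Sym2 V)) ∪ starS {a₁})).Reachable e₁ w ∨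
      (G.deleteEdges (({e,f} : Set (Sym2 V)) ∪ starS {a₁})).Reachable e₂ w)
    (hp₁K : (G.deleteEdges ({e,f} : Set (Sym2 V))).Adj a₁ p₁)
    (hp₁ : (G.deleteEdges (({e,f} : Set (Sym2 V)) ∪ starS {a₁})).Reachable e₁ p₁)
    (hq₁K : (G.deleteEdges ({e,f} : Set (Sym2 V))).Adj a₁ q₁)
    (hq₁ : (G.deleteEdges (({e,f} : Set (Sym2 V)) ∪ starS {a₁})).Reachable e₂ q₁)
    (hp₂K : (G.deleteEdges ({e,f} : Set (Sym2 V))).Adj a₂ p₂)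
    (hp₂ : (G.deleteEdges (({e,f} : Set (Sym2 V)) ∪ starS {a₂})).Reachable e₁ p₂)
    (h1' : ¬ (G.deleteEdges (({e,f} : Set (Sym2 V)) ∪ starS {a₂})).Reachable e₁ e₂)
    (hpair' : ((G.deleteEdges (({e,f} : Set (Sym2 V)) ∪ starS {a₂})).Reachable e₁ f₁ ∧
        (G.deleteEdges (({e,f} : Set (Sym2 V)) ∪ starS {a₂})).Reachable e₂ f₂) ∨
      ((G.deleteEdges (({e,f} : Set (Sym2 V)) ∪ starS {a₂})).Reachable e₁ f₂ ∧
        (G.deleteEdges (({e,f} : Set (Sym2 V)) ∪ starS {a₂})).Reachable e₂ f₁))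
    (he1a2 : e₁ ≠ a₂) (he2a2 : e₂ ≠ a₂)
    (hcov2 : ∀ w, w ≠ a₂ →
      (G.deleteEdges (({e,f} : Set (Sym2 V)) ∪ starS {a₂})).Reachable e₁ w ∨
      (G.deleteEdges (({e,f} : Set (Sym2 V)) ∪ starS {a₂})).Reachable e₂ w)
    (hor : (G.deleteEdges (({e,f} : Set (Sym2 V)) ∪ starS {a₁})).Reachable e₁ a₂) :
    ∃ b u v : V, G.Adj a₁ b ∧
      ¬ (G.deleteEdges (insert s(a₁,b) ({e,f} : Set (Sym2 V)))).Reachable u v := by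
  classical
  set Kd1 := G.deleteEdges (({e,f} : Set (Sym2 V)) ∪ starS {a₁}) with hKd1
  set Kd2 := G.deleteEdges (({e,f} : Set (Sym2 V)) ∪ starS {a₂}) with hKd2
  have hna2 : ¬ Kd1.Reachable e₂ a₂ := fun h => h1 (hor.trans h.symm)
  -- step 1 : component of e₂ w.r.t a₁ is reachable from a₁ in Kd2
  have step1 : ∀ w, Kd1.Reachable e₂ w → Kd2.Reachable a₁ w := by
    intro w hw
    have htr := reach_mono (H₁ := Kd1) (H₂ := Kd2) (Z := {t | Kd1.Reachable e₂ t})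
      (fun u v hu hadj => Reachable.trans hu hadj.reachable)
      (fun u v hu hv hadj => by
        obtain ⟨hG, hm⟩ := SimpleGraph.deleteEdges_adj.1 hadj
        refine SimpleGraph.deleteEdges_adj.2 ⟨hG, ?_⟩
        rintro (hin | hin)
        · exact hm (Or.inl hin)
        · rcases mem_starS.1 hin with h' | h'
          · exact hna2 (by rw [← h']; exact hu)
          · exact hna2 (by rw [← h']; exact hv))
      (hq₁ : q₁ ∈ {t | Kd1.Reachable e₂ t}) (hq₁.symm.trans hw)
    have hadj2 : Kd2.Adj a₁ q₁ := by
      obtain ⟨hG, hm⟩ := SimpleGraph.deleteEdges_adj.1 hq₁K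
      refine SimpleGraph.deleteEdges_adj.2 ⟨hG, ?_⟩
      rintro (hin | hin)
      · exact hm hin
      · rcases mem_starS.1 hin with h' | h'
        · exact ha h'
        · exact hna2 (by rw [← h']; exact hq₁)
    exact hadj2.reachable.trans htr.1
  have hra1e2 : Kd2.Reachable a₁ e₂ := step1 e₂ (Reachable.refl _)
  have hn2e1a1 : ¬ Kd2.Reachable e₁ a₁ := fun h => h1' (h.trans hra1e2)
  have h2e2a1 : Kd2.Reachable e₂ a₁ := by
    rcases hcov2 a₁ ha with h | h
    · exact absurd h hn2e1a1
    · exact h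
  -- step 3 : component of e₁ w.r.t a₂ is contained in P₁
  have step3 : ∀ w, Kd2.Reachable e₁ w → Kd1.Reachable e₁ w := by
    intro w hw
    have htr := reach_mono (H₁ := Kd2) (H₂ := Kd1) (Z := {t | Kd2.Reachable e₁ t})
      (fun u v hu hadj => Reachable.trans hu hadj.reachable)
      (fun u v hu hv hadj => by
        obtain ⟨hG, hm⟩ := SimpleGraph.deleteEdges_adj.1 hadj
        refine SimpleGraph.deleteEdges_adj.2 ⟨hG, ?_⟩
        rintro (hin | hin)
        · exact hm (Or.inl hin)
        · rcases mem_starS.1 hin with h' | h'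
          · exact hn2e1a1 (by rw [← h']; exact hu)
          · exact hn2e1a1 (by rw [← h']; exact hv))
      (hp₂ : p₂ ∈ {t | Kd2.Reachable e₁ t}) (hp₂.symm.trans hw)
    have hadj1 : Kd1.Adj a₂ p₂ := by
      obtain ⟨hG, hm⟩ := SimpleGraph.deleteEdges_adj.1 hp₂K
      refine SimpleGraph.deleteEdges_adj.2 ⟨hG, ?_⟩
      rintro (hin | hin)
      · exact hm hin
      · rcases mem_starS.1 hin with h' | h'
        · exact ha h'.symm
        · exact hn2e1a1 (by rw [← h']; exact hp₂)
    exact hor.trans (hadj1.reachable.trans htr.1)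
  have hpairR : Kd2.Reachable e₁ f₁ ∧ Kd2.Reachable e₂ f₂ := by
    rcases hpair' with h | h
    · exact h
    · exfalso
      have hf2 : Kd2.Reachable e₂ f₂ := h2e2a1.trans (step1 f₂ h3)
      exact h1' (h.1.trans hf2.symm)
  -- the middle region is empty
  have Zempty : ∀ v', v' = a₁ ∨ v' = a₂ ∨ Kd1.Reachable e₂ v' ∨ Kd2.Reachable e₁ v' := by
    intro v'
    by_contra hv
    push_neg at hv
    obtain ⟨hva1, hva2, hvQ1, hvQ2⟩ := hv
    refine no_sep2 htri (S := {a₁, a₂})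
      (Z := {t | t ≠ a₁ ∧ t ≠ a₂ ∧ ¬ Kd1.Reachable e₂ t ∧ ¬ Kd2.Reachable e₁ t})
      (by rw [Set.ncard_pair ha]) ?_ ?_
      (⟨hva1, hva2, hvQ1, hvQ2⟩ : _) (w₀ := e₂) ?_ ?_
    · rintro z ⟨hz1, hz2, _, _⟩ (hmem | hmem)
      · exact hz1 hmem
      · exact hz2 hmem
    · rintro z ⟨hz1, hz2, hz3, hz4⟩ t hGt
      have hzP1 : Kd1.Reachable e₁ z := by
        rcases hcov1 z hz1 with h | h
        · exact h
        · exact absurd h hz3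
      have hzP2 : Kd2.Reachable e₂ z := by
        rcases hcov2 z hz2 with h | h
        · exact absurd h hz4
        · exact h
      by_cases hta1 : t = a₁
      · exact Or.inr (Or.inl hta1)
      by_cases hta2 : t = a₂
      · exact Or.inr (Or.inr hta2)
      refine Or.inl ⟨hta1, hta2, ?_, ?_⟩
      all_goals {
        by_cases hse : s(z,t) = e
        · exfalso
          rcases Sym2.eq_iff.1 (hse.trans hee) with ⟨hz', _⟩ | ⟨hz', _⟩
          · exact hz4 (by rw [hz'])
          · exact hz3 (by rw [hz'])
        · by_cases hsf : s(z,t) = f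
          · exfalso
            rcases Sym2.eq_iff.1 (hsf.trans hff) with ⟨hz', _⟩ | ⟨hz', _⟩
            · exact hz4 (by rw [hz']; exact hpairR.1)
            · exact hz3 (by rw [hz']; exact h3)
          · intro hre
            have hadj1 : Kd1.Adj t z := by
              refine SimpleGraph.deleteEdges_adj.2 ⟨hGt.symm, ?_⟩
              rintro (hin | hin)
              · rcases hin with hin | hin
                · exact hse (Sym2.eq_swap.trans hin)
                · exact hsf (Sym2.eq_swap.trans hin)
              · rcases mem_starS.1 hin with h' | h'
                · exact hta1 h'
                · exact hz1 h'
            have hadj2 : Kd2.Adj t z := by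
              refine SimpleGraph.deleteEdges_adj.2 ⟨hGt.symm, ?_⟩
              rintro (hin | hin)
              · rcases hin with hin | hin
                · exact hse (Sym2.eq_swap.trans hin)
                · exact hsf (Sym2.eq_swap.trans hin)
              · rcases mem_starS.1 hin with h' | h'
                · exact hta2 h'
                · exact hz2 h'
            first
              | exact hz3 (hre.trans hadj1.reachable)
              | exact hz4 (hre.trans hadj2.reachable)
      }
    · rintro ⟨_, _, hq, _⟩
      exact hq (Reachable.refl _)
    · rintro (hmem | hmem)
      · exact he2a hmem
      · exact he2a2 hmem
  -- a₁'s only neighbour in the e₁-side is a₂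
  have step6 : ∀ t, (G.deleteEdges ({e,f} : Set (Sym2 V))).Adj a₁ t →
      Kd1.Reachable e₁ t → t = a₂ := by
    intro t hKt hRt
    rcases Zempty t with h | h | h | h
    · exact absurd h.symm hKt.ne
    · exact h
    · exact absurd (hRt.trans h.symm) h1
    · exfalso
      have hta2 : t ≠ a₂ := ne_of_reach_star he1a2 h
      have hadj2 : Kd2.Adj a₁ t := by
        obtain ⟨hG, hm⟩ := SimpleGraph.deleteEdges_adj.1 hKt
        refine SimpleGraph.deleteEdges_adj.2 ⟨hG, ?_⟩
        rintro (hin | hin)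
        · exact hm hin
        · rcases mem_starS.1 hin with h' | h'
          · exact ha h'
          · exact hta2 h'
      exact hn2e1a1 (h.trans hadj2.reachable.symm)
  have hp₁a₂ : p₁ = a₂ := step6 p₁ hp₁K hp₁
  have hKAdj12 : (G.deleteEdges ({e,f} : Set (Sym2 V))).Adj a₁ a₂ := by
    rw [← hp₁a₂]; exact hp₁K
  refine ⟨a₂, e₁, a₁, (SimpleGraph.deleteEdges_adj.1 hKAdj12).1, ?_⟩
  intro hreach
  have hcl : ∀ u v, u ∈ {w | Kd1.Reachable e₁ w} →
      (G.deleteEdges (insert s(a₁,a₂) ({e,f} : Set (Sym2 V)))).Adj u v →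
      v ∈ {w | Kd1.Reachable e₁ w} := by
    intro u v hu hadj
    obtain ⟨hG, hm⟩ := SimpleGraph.deleteEdges_adj.1 hadj
    have hmef : s(u,v) ∉ ({e,f} : Set (Sym2 V)) := fun h' => hm (Set.mem_insert_iff.2 (Or.inr h'))
    have hKuv : (G.deleteEdges ({e,f} : Set (Sym2 V))).Adj u v :=
      SimpleGraph.deleteEdges_adj.2 ⟨hG, hmef⟩
    by_cases hva1 : v = a₁
    · exfalso
      have hKav : (G.deleteEdges ({e,f} : Set (Sym2 V))).Adj a₁ u := by
        rw [← hva1]; exact hKuv.symm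
      have hua2 : u = a₂ := step6 u hKav hu
      exact hm (Set.mem_insert_iff.2 (Or.inl (by rw [hua2, hva1]; exact Sym2.eq_swap)))
    · have hua1 : u ≠ a₁ := ne_of_reach_star he1a hu
      have hadj1 : Kd1.Adj u v := by
        refine SimpleGraph.deleteEdges_adj.2 ⟨hG, ?_⟩
        rintro (hin | hin)
        · exact hmef hin
        · rcases mem_starS.1 hin with h' | h'
          · exact hua1 h'
          · exact hva1 h'
      exact Reachable.trans hu hadj1.reachable
  have : a₁ ∈ {w | Kd1.Reachable e₁ w} :=
    reach_closed hcl (Reachable.refl e₁ : e₁ ∈ {w | Kd1.Reachable e₁ w}) hreach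
  exact (ne_of_reach_star he1a this) rfl

/-- Core of the vertex–edge case: the third edge of the edge cut is incident
to the vertex of the vertex cut. -/
lemma b_core [Fintype V] {G : SimpleGraph V} (htri : IsTriconnected G)
    {e f g : Sym2 V} {a e₁ e₂ f₁ f₂ gp gq p : V}
    (hee : e = s(e₁,e₂)) (hff : f = s(f₁,f₂)) (hgg : g = s(gp,gq))
    (h1 : ¬ (G.deleteEdges (({e,f} : Set (Sym2 V)) ∪ starS {a})).Reachable e₁ e₂)
    (h2 : (G.deleteEdges (({e,f} : Set (Sym2 V)) ∪ starS {a})).Reachable e₁ f₁)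
    (h3 : (G.deleteEdges (({e,f} : Set (Sym2 V)) ∪ starS {a})).Reachable e₂ f₂)
    (he1a : e₁ ≠ a) (he2a : e₂ ≠ a)
    (hcov1 : ∀ w, w ≠ a →
      (G.deleteEdges (({e,f} : Set (Sym2 V)) ∪ starS {a})).Reachable e₁ w ∨
      (G.deleteEdges (({e,f} : Set (Sym2 V)) ∪ starS {a})).Reachable e₂ w)
    (hpK : (G.deleteEdges ({e,f} : Set (Sym2 V))).Adj a p)
    (hp : (G.deleteEdges (({e,f} : Set (Sym2 V)) ∪ starS {a})).Reachable e₁ p)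
    (h1E : ¬ (G.deleteEdges ({e,f,g} : Set (Sym2 V))).Reachable e₁ e₂)
    (hpairE : ((G.deleteEdges ({e,f,g} : Set (Sym2 V))).Reachable e₁ f₁ ∧
        (G.deleteEdges ({e,f,g} : Set (Sym2 V))).Reachable e₂ f₂) ∨
      ((G.deleteEdges ({e,f,g} : Set (Sym2 V))).Reachable e₁ f₂ ∧
        (G.deleteEdges ({e,f,g} : Set (Sym2 V))).Reachable e₂ f₁))
    (hgor : ((G.deleteEdges ({e,f,g} : Set (Sym2 V))).Reachable e₁ gp ∧
        (G.deleteEdges ({e,f,g} : Set (Sym2 V))).Reachable e₂ gq) ∨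
      ((G.deleteEdges ({e,f,g} : Set (Sym2 V))).Reachable e₁ gq ∧
        (G.deleteEdges ({e,f,g} : Set (Sym2 V))).Reachable e₂ gp))
    (hcovE : ∀ w, (G.deleteEdges ({e,f,g} : Set (Sym2 V))).Reachable e₁ w ∨
      (G.deleteEdges ({e,f,g} : Set (Sym2 V))).Reachable e₂ w)
    (hloc : (gp = a ∨ (G.deleteEdges (({e,f} : Set (Sym2 V)) ∪ starS {a})).Reachable e₂ gp) ∧
      (gq = a ∨ (G.deleteEdges (({e,f} : Set (Sym2 V)) ∪ starS {a})).Reachable e₂ gq)) :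
    ∃ b : V, g = s(a, b) ∧
      (G.deleteEdges (({e,f} : Set (Sym2 V)) ∪ starS {a})).Reachable e₂ b := by
  classical
  set Kd1 := G.deleteEdges (({e,f} : Set (Sym2 V)) ∪ starS {a}) with hKd1
  set KE := G.deleteEdges ({e,f,g} : Set (Sym2 V)) with hKE
  have hPnotg : ∀ u, Kd1.Reachable e₁ u → u ≠ gp ∧ u ≠ gq := by
    intro u hu
    have hua : u ≠ a := ne_of_reach_star he1a hu
    constructor
    · intro h'
      rcases hloc.1 with h'' | h''
      · exact hua (h'.trans h'')
      · rw [← h'] at h''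
        exact h1 (hu.trans h''.symm)
    · intro h'
      rcases hloc.2 with h'' | h''
      · exact hua (h'.trans h'')
      · rw [← h'] at h''
        exact h1 (hu.trans h''.symm)
  have transA : ∀ w, Kd1.Reachable e₁ w → KE.Reachable e₁ w := by
    intro w hw
    refine (reach_mono (H₁ := Kd1) (H₂ := KE) (Z := {t | Kd1.Reachable e₁ t})
      (fun u v hu hadj => Reachable.trans hu hadj.reachable)
      (fun u v hu hv hadj => ?_)
      (Reachable.refl e₁ : e₁ ∈ {t | Kd1.Reachable e₁ t}) hw).1
    obtain ⟨hG, hm⟩ := SimpleGraph.deleteEdges_adj.1 hadj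
    refine SimpleGraph.deleteEdges_adj.2 ⟨hG, ?_⟩
    rintro (hin | hin | hin)
    · exact hm (Or.inl (Or.inl hin))
    · exact hm (Or.inl (Or.inr hin))
    · have hg' : s(u,v) = s(gp,gq) := (hin : s(u,v) = g).trans hgg
      rcases Sym2.eq_iff.1 hg' with ⟨h1', _⟩ | ⟨h1', _⟩
      · exact (hPnotg u hu).1 h1'
      · exact (hPnotg u hu).2 h1'
  have hpe := hPnotg p hp
  have hKEap : KE.Adj a p := by
    obtain ⟨hG, hm⟩ := SimpleGraph.deleteEdges_adj.1 hpK
    refine SimpleGraph.deleteEdges_adj.2 ⟨hG, ?_⟩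
    rintro (hin | hin | hin)
    · exact hm (Or.inl hin)
    · exact hm (Or.inr hin)
    · have hg' : s(a,p) = s(gp,gq) := (hin : s(a,p) = g).trans hgg
      rcases Sym2.eq_iff.1 hg' with ⟨_, h2'⟩ | ⟨_, h2'⟩
      · exact hpe.2 h2'
      · exact hpe.1 h2'
  have hREa : KE.Reachable e₁ a := (transA p hp).trans hKEap.symm.reachable
  have hnEe2a : ¬ KE.Reachable e₂ a := fun h => h1E (hREa.trans h.symm)
  have hmain : ∀ gX gY : V, g = s(gX,gY) →
      KE.Reachable e₁ gX → KE.Reachable e₂ gY →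
      (gX = a ∨ Kd1.Reachable e₂ gX) → (gY = a ∨ Kd1.Reachable e₂ gY) →
      ∃ b : V, g = s(a, b) ∧ Kd1.Reachable e₂ b := by
    intro gX gY hgXY hgX1 hgY2 hlocX hlocY
    have hgYa : gY ≠ a := fun h => hnEe2a (h ▸ hgY2)
    have hlocY' : Kd1.Reachable e₂ gY := by
      rcases hlocY with h | h
      · exact absurd h hgYa
      · exact h
    have transB : ∀ w, KE.Reachable e₂ w → Kd1.Reachable e₂ w := by
      intro w hw
      refine (reach_mono (H₁ := KE) (H₂ := Kd1) (Z := {t | KE.Reachable e₂ t})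
        (fun u v hu hadj => Reachable.trans hu hadj.reachable)
        (fun u v hu hv hadj => ?_)
        (Reachable.refl e₂ : e₂ ∈ {t | KE.Reachable e₂ t}) hw).1
      obtain ⟨hG, hm⟩ := SimpleGraph.deleteEdges_adj.1 hadj
      refine SimpleGraph.deleteEdges_adj.2 ⟨hG, ?_⟩
      rintro (hin | hin)
      · rcases hin with hin | hin
        · exact hm (Or.inl hin)
        · exact hm (Or.inr (Or.inl hin))
      · rcases mem_starS.1 hin with h' | h'
        · exact hnEe2a (h' ▸ hu)
        · exact hnEe2a (h' ▸ hv)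
    have hpairR : KE.Reachable e₁ f₁ ∧ KE.Reachable e₂ f₂ := by
      rcases hpairE with h | h
      · exact h
      · exact absurd (h2.trans (transB f₁ h.2).symm) h1
    have Zempty : ∀ v', v' = a ∨ Kd1.Reachable e₁ v' ∨ KE.Reachable e₂ v' := by
      intro v'
      by_contra hv
      push_neg at hv
      obtain ⟨hva, hvP, hvY⟩ := hv
      have hagY : a ≠ gY := fun h => hgYa h.symm
      refine no_sep2 htri (S := {a, gY})
        (Z := {t | t ≠ a ∧ ¬ Kd1.Reachable e₁ t ∧ ¬ KE.Reachable e₂ t})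
        (by rw [Set.ncard_pair hagY]) ?_ ?_ (⟨hva, hvP, hvY⟩ : _) (w₀ := e₁) ?_ ?_
      · rintro z ⟨hz1, _, hz3⟩ (hmem | hmem)
        · exact hz1 hmem
        · exact hz3 (by rw [hmem]; exact hgY2)
      · rintro z ⟨hz1, hz2, hz3⟩ t hGt
        by_cases hta : t = a
        · exact Or.inr (Or.inl hta)
        by_cases hse : s(z,t) = e
        · exfalso
          rcases Sym2.eq_iff.1 (hse.trans hee) with ⟨hz', _⟩ | ⟨hz', _⟩
          · exact hz2 (by rw [hz'])
          · exact hz3 (by rw [hz'])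
        by_cases hsf : s(z,t) = f
        · exfalso
          rcases Sym2.eq_iff.1 (hsf.trans hff) with ⟨hz', _⟩ | ⟨hz', _⟩
          · exact hz2 (by rw [hz']; exact h2)
          · exact hz3 (by rw [hz']; exact hpairR.2)
        by_cases hsg : s(z,t) = g
        · rcases Sym2.eq_iff.1 (hsg.trans hgXY) with ⟨hz', ht'⟩ | ⟨hz', _⟩
          · exact Or.inr (Or.inr ht')
          · exact absurd (by rw [hz']; exact hgY2 : KE.Reachable e₂ z) hz3
        · refine Or.inl ⟨hta, ?_, ?_⟩
          · intro hre
            have hadj1 : Kd1.Adj t z := by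
              refine SimpleGraph.deleteEdges_adj.2 ⟨hGt.symm, ?_⟩
              rintro (hin | hin)
              · rcases hin with hin | hin
                · exact hse (Sym2.eq_swap.trans hin)
                · exact hsf (Sym2.eq_swap.trans hin)
              · rcases mem_starS.1 hin with h' | h'
                · exact hta h'
                · exact hz1 h'
            exact hz2 (hre.trans hadj1.reachable)
          · intro hre
            have hadjE : KE.Adj t z := by
              refine SimpleGraph.deleteEdges_adj.2 ⟨hGt.symm, ?_⟩
              rintro (hin | hin | hin)
              · exact hse (Sym2.eq_swap.trans hin)
              · exact hsf (Sym2.eq_swap.trans hin)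
              · exact hsg (Sym2.eq_swap.trans hin)
            exact hz3 (hre.trans hadjE.reachable)
      · rintro ⟨_, hq, _⟩
        exact hq (Reachable.refl _)
      · rintro (hmem | hmem)
        · exact he1a hmem
        · exact h1E (show KE.Reachable e₂ e₁ by rw [hmem]; exact hgY2).symm
    rcases hlocX with hgXa | hgXQ
    · exact ⟨gY, by rw [← hgXa]; exact hgXY, hlocY'⟩
    · rcases Zempty gX with h | h | h
      · exact ⟨gY, by rw [← h]; exact hgXY, hlocY'⟩
      · exact absurd (h.trans hgXQ.symm) h1
      · exact absurd (hgX1.trans h.symm) h1E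
  rcases hgor with ⟨hx1, hy2⟩ | ⟨hx1, hy2⟩
  · exact hmain gp gq hgg hx1 hy2 hloc.1 hloc.2
  · exact hmain gq gp (hgg.trans Sym2.eq_swap) hx1 hy2 hloc.2 hloc.1

/-- Core of the edge–edge case: impossible. -/
lemma a_core [Fintype V] {G : SimpleGraph V} (htri : IsTriconnected G)
    {e f g h : Sym2 V} {e₁ e₂ f₁ f₂ g₁ g₂ hp hq : V}
    (hef : e ≠ f) (hge : g ≠ e) (hgf : g ≠ f) (hgh : g ≠ h) (hgE : g ∈ G.edgeSet)
    (hee : e = s(e₁,e₂)) (hff : f = s(f₁,f₂)) (hgg : g = s(g₁,g₂)) (hhh : h = s(hp,hq))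
    (h1g : ¬ (G.deleteEdges ({e,f,g} : Set (Sym2 V))).Reachable e₁ e₂)
    (h2g : (G.deleteEdges ({e,f,g} : Set (Sym2 V))).Reachable e₁ f₁)
    (h3g : (G.deleteEdges ({e,f,g} : Set (Sym2 V))).Reachable e₂ f₂)
    (hg1 : (G.deleteEdges ({e,f,g} : Set (Sym2 V))).Reachable e₁ g₁)
    (hg2 : (G.deleteEdges ({e,f,g} : Set (Sym2 V))).Reachable e₂ g₂)
    (h1h : ¬ (G.deleteEdges ({e,f,h} : Set (Sym2 V))).Reachable e₁ e₂)
    (hpairH : ((G.deleteEdges ({e,f,h} : Set (Sym2 V))).Reachable e₁ f₁ ∧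
        (G.deleteEdges ({e,f,h} : Set (Sym2 V))).Reachable e₂ f₂) ∨
      ((G.deleteEdges ({e,f,h} : Set (Sym2 V))).Reachable e₁ f₂ ∧
        (G.deleteEdges ({e,f,h} : Set (Sym2 V))).Reachable e₂ f₁))
    (hhor : ((G.deleteEdges ({e,f,h} : Set (Sym2 V))).Reachable e₁ hp ∧
        (G.deleteEdges ({e,f,h} : Set (Sym2 V))).Reachable e₂ hq) ∨
      ((G.deleteEdges ({e,f,h} : Set (Sym2 V))).Reachable e₁ hq ∧
        (G.deleteEdges ({e,f,h} : Set (Sym2 V))).Reachable e₂ hp))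
    (hcovh : ∀ w, (G.deleteEdges ({e,f,h} : Set (Sym2 V))).Reachable e₁ w ∨
      (G.deleteEdges ({e,f,h} : Set (Sym2 V))).Reachable e₂ w)
    (hloc : (G.deleteEdges ({e,f,g} : Set (Sym2 V))).Reachable e₂ hp ∧
      (G.deleteEdges ({e,f,g} : Set (Sym2 V))).Reachable e₂ hq) : False := by
  classical
  set Kg := G.deleteEdges ({e,f,g} : Set (Sym2 V)) with hKg
  set Kh := G.deleteEdges ({e,f,h} : Set (Sym2 V)) with hKh
  have hXnoth : ∀ u, Kg.Reachable e₁ u → u ≠ hp ∧ u ≠ hq := by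
    intro u hu
    constructor
    · intro h'
      rw [h'] at hu
      exact h1g (hu.trans hloc.1.symm)
    · intro h'
      rw [h'] at hu
      exact h1g (hu.trans hloc.2.symm)
  have transX : ∀ w, Kg.Reachable e₁ w → Kh.Reachable e₁ w := by
    intro w hw
    refine (reach_mono (H₁ := Kg) (H₂ := Kh) (Z := {t | Kg.Reachable e₁ t})
      (fun u v hu hadj => Reachable.trans hu hadj.reachable)
      (fun u v hu hv hadj => ?_)
      (Reachable.refl e₁ : e₁ ∈ {t | Kg.Reachable e₁ t}) hw).1
    obtain ⟨hG, hm⟩ := SimpleGraph.deleteEdges_adj.1 hadj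
    refine SimpleGraph.deleteEdges_adj.2 ⟨hG, ?_⟩
    rintro (hin | hin | hin)
    · exact hm (Or.inl hin)
    · exact hm (Or.inr (Or.inl hin))
    · have hg' : s(u,v) = s(hp,hq) := (hin : s(u,v) = h).trans hhh
      rcases Sym2.eq_iff.1 hg' with ⟨h1', _⟩ | ⟨h1', _⟩
      · exact (hXnoth u hu).1 h1'
      · exact (hXnoth u hu).2 h1'
  have hg1h : Kh.Reachable e₁ g₁ := transX g₁ hg1
  have hng1Y : ¬ Kh.Reachable e₂ g₁ := fun h' => h1h (hg1h.trans h'.symm)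
  have transY : ∀ w, Kh.Reachable e₂ w → Kg.Reachable e₂ w := by
    intro w hw
    refine (reach_mono (H₁ := Kh) (H₂ := Kg) (Z := {t | Kh.Reachable e₂ t})
      (fun u v hu hadj => Reachable.trans hu hadj.reachable)
      (fun u v hu hv hadj => ?_)
      (Reachable.refl e₂ : e₂ ∈ {t | Kh.Reachable e₂ t}) hw).1
    obtain ⟨hG, hm⟩ := SimpleGraph.deleteEdges_adj.1 hadj
    refine SimpleGraph.deleteEdges_adj.2 ⟨hG, ?_⟩
    rintro (hin | hin | hin)
    · exact hm (Or.inl hin)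
    · exact hm (Or.inr (Or.inl hin))
    · have hg' : s(u,v) = s(g₁,g₂) := (hin : s(u,v) = g).trans hgg
      rcases Sym2.eq_iff.1 hg' with ⟨h1', _⟩ | ⟨_, h2'⟩
      · exact hng1Y (by rw [← h1']; exact hu)
      · exact hng1Y (by rw [← h2']; exact hv)
  have hpairHR : Kh.Reachable e₁ f₁ ∧ Kh.Reachable e₂ f₂ := by
    rcases hpairH with h' | h'
    · exact h'
    · exact absurd (h2g.trans (transY f₁ h'.2).symm) h1g
  have hmain : ∀ hX hY : V, h = s(hX,hY) →
      Kh.Reachable e₁ hX → Kh.Reachable e₂ hY →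
      Kg.Reachable e₂ hX → Kg.Reachable e₂ hY → False := by
    intro hX hY hhXY hX1 hY2 hXg hYg
    by_cases hZ : ∃ z₀, Kg.Reachable e₂ z₀ ∧ Kh.Reachable e₁ z₀
    · obtain ⟨z₀, hz₀⟩ := hZ
      have hg1hY : g₁ ≠ hY := by
        intro h'
        rw [h'] at hg1
        exact h1g (hg1.trans hYg.symm)
      by_cases hout : ∃ w₀, w₀ ∉ {t : V | Kg.Reachable e₂ t ∧ Kh.Reachable e₁ t} ∧
          w₀ ∉ ({g₁, hY} : Set V)
      · obtain ⟨w₀, hw1, hw2⟩ := hout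
        refine no_sep2 htri (S := {g₁, hY})
          (Z := {t : V | Kg.Reachable e₂ t ∧ Kh.Reachable e₁ t})
          (by rw [Set.ncard_pair hg1hY]) ?_ ?_ (hz₀ : _) hw1 hw2
        · rintro z ⟨hz1, hz2⟩ (hmem | hmem)
          · rw [hmem] at hz1
            exact h1g (hg1.trans hz1.symm)
          · rw [hmem] at hz2
            exact h1h (hz2.trans hY2.symm)
        · rintro z ⟨hz1, hz2⟩ t hGt
          by_cases hse : s(z,t) = e
          · exfalso
            rcases Sym2.eq_iff.1 (hse.trans hee) with ⟨hz', _⟩ | ⟨hz', _⟩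
            · rw [hz'] at hz1
              exact h1g hz1.symm
            · rw [hz'] at hz2
              exact h1h hz2
          by_cases hsf : s(z,t) = f
          · exfalso
            rcases Sym2.eq_iff.1 (hsf.trans hff) with ⟨hz', _⟩ | ⟨hz', _⟩
            · rw [hz'] at hz1
              exact h1g (h2g.trans hz1.symm)
            · rw [hz'] at hz2
              exact h1h (hz2.trans hpairHR.2.symm)
          by_cases hsg : s(z,t) = g
          · rcases Sym2.eq_iff.1 (hsg.trans hgg) with ⟨hz', _⟩ | ⟨_, ht'⟩
            · exfalso
              rw [hz'] at hz1
              exact h1g (hg1.trans hz1.symm)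
            · exact Or.inr (Or.inl ht')
          by_cases hsh : s(z,t) = h
          · rcases Sym2.eq_iff.1 (hsh.trans hhXY) with ⟨_, ht'⟩ | ⟨hz', _⟩
            · exact Or.inr (Or.inr ht')
            · exfalso
              rw [hz'] at hz2
              exact h1h (hz2.trans hY2.symm)
          · refine Or.inl ⟨?_, ?_⟩
            · refine hz1.trans (Adj.reachable ?_)
              refine SimpleGraph.deleteEdges_adj.2 ⟨hGt, ?_⟩
              rintro (hin | hin | hin)
              · exact hse hin
              · exact hsf hin
              · exact hsg hin
            · refine hz2.trans (Adj.reachable ?_)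
              refine SimpleGraph.deleteEdges_adj.2 ⟨hGt, ?_⟩
              rintro (hin | hin | hin)
              · exact hse hin
              · exact hsf hin
              · exact hsh hin
      · push_neg at hout
        have he1S : e₁ ∈ ({g₁, hY} : Set V) := by
          refine hout e₁ ?_
          rintro ⟨hz1, _⟩
          exact h1g hz1.symm
        have he1g1 : e₁ = g₁ := by
          rcases he1S with h' | h'
          · exact h'
          · exfalso
            rw [h'] at h1h
            exact h1h hY2.symm
        have he2S : e₂ ∈ ({g₁, hY} : Set V) := by
          refine hout e₂ ?_
          rintro ⟨_, hz2⟩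
          exact h1h hz2
        have he2hY : e₂ = hY := by
          rcases he2S with h' | h'
          · exfalso
            rw [h'] at h1g
            exact h1g hg1
          · exact h'
        have hf1S : f₁ ∈ ({g₁, hY} : Set V) := by
          refine hout f₁ ?_
          rintro ⟨hz1, _⟩
          exact h1g (h2g.trans hz1.symm)
        have hf1g1 : f₁ = g₁ := by
          rcases hf1S with h' | h'
          · exact h'
          · exfalso
            rw [h'] at hpairHR
            exact h1h (hpairHR.1.trans hY2.symm)
        have hf2S : f₂ ∈ ({g₁, hY} : Set V) := by
          refine hout f₂ ?_
          rintro ⟨_, hz2⟩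
          exact h1h (hz2.trans hpairHR.2.symm)
        have hf2hY : f₂ = hY := by
          rcases hf2S with h' | h'
          · exfalso
            rw [h'] at h3g
            exact h1g (hg1.trans h3g.symm)
          · exact h'
        refine hef ?_
        rw [hee, hff, he1g1, he2hY, hf1g1, hf2hY]
    · push_neg at hZ
      have hg2Y : Kh.Reachable e₂ g₂ := by
        rcases hcovh g₂ with h' | h'
        · exact absurd h' (hZ g₂ hg2)
        · exact h'
      have hadj : Kh.Adj g₁ g₂ := by
        refine SimpleGraph.deleteEdges_adj.2 ⟨?_, ?_⟩
        · exact (SimpleGraph.mem_edgeSet G).1 (hgg ▸ hgE)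
        · rintro (hin | hin | hin)
          · exact hge (hgg.trans hin)
          · exact hgf (hgg.trans hin)
          · exact hgh (hgg.trans hin)
      exact h1h ((hg1h.trans hadj.reachable).trans hg2Y.symm)
  rcases hhor with ⟨h1', h2'⟩ | ⟨h1', h2'⟩
  · exact hmain hp hq hhh h1' h2' hloc.1 hloc.2
  · exact hmain hq hp (hhh.trans Sym2.eq_swap) h1' h2' hloc.2 hloc.1

/-- A triconnected graph minus two edges is connected. -/
lemma K_conn [Fintype V] {G : SimpleGraph V} (htri : IsTriconnected G)
    {e f : Sym2 V} (x y : V) : (G.deleteEdges ({e,f} : Set (Sym2 V))).Reachable x y := by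
  classical
  by_contra hxy
  set Kd := G.deleteEdges ({e,f} : Set (Sym2 V)) with hKd
  set Z : Set V := {w | Kd.Reachable x w} with hZdef
  have hxZ : x ∈ Z := Reachable.refl x
  have hyZ : y ∉ Z := hxy
  have hZcl : ∀ u t, u ∈ Z → Kd.Adj u t → t ∈ Z := fun u t hu h => Reachable.trans hu h.reachable
  obtain ⟨oe, hoe1, hoe2, hoe3⟩ := edge_contrib (Z := Z) e
  obtain ⟨of, hof1, hof2, hof3⟩ := edge_contrib (Z := Z) f
  have hD : ∀ z t : V, s(z,t) ∈ ({e,f} : Set (Sym2 V)) →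
      s(z,t) = s(x,x) ∨ s(z,t) = e ∨ s(z,t) = f := by
    rintro z t (hin | hin)
    · exact Or.inr (Or.inl hin)
    · exact Or.inr (Or.inr hin)
  have hcross : ∀ z t, Kd.Reachable x z → ¬ Kd.Reachable x t → s(z,t) = s(x,x) → False := by
    intro z t hz ht heq
    rcases Sym2.eq_iff.1 heq with ⟨h1, h2⟩ | ⟨h1, h2⟩ <;>
      · rw [h1] at hz; rw [h2] at ht; exact ht hz
  have hScard : (oe ∪ of).ncard ≤ 2 := by
    have h1 := Set.ncard_union_le oe of
    omega
  by_cases hout : ∃ w₀, w₀ ∉ Z ∧ w₀ ∉ oe ∪ of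
  · obtain ⟨w₀, hw1, hw2⟩ := hout
    refine no_sep2 htri hScard ?_ ?_ hxZ hw1 hw2
    · intro z hz hmem
      rcases hmem with hmem | hmem
      · exact (hoe2 z hmem).1 hz
      · exact (hof2 z hmem).1 hz
    · intro z hz t hGadj
      by_cases htZ : t ∈ Z
      · exact Or.inl htZ
      · have hnadj : ¬ Kd.Adj z t := fun h => htZ (hZcl _ _ hz h)
        have hmem := mem_of_not_adj hGadj hnadj
        rcases hmem with hin | hin
        · exact Or.inr (Or.inl (hoe3 z t hz htZ hin))
        · exact Or.inr (Or.inr (hof3 z t hz htZ hin))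
  · push_neg at hout
    rcases hout y hyZ with hyoe | hyof
    · obtain ⟨_, z_e, hze, heqe⟩ := hoe2 y hyoe
      refine endgameE htri (e := s(x,x)) (f := e) (g := f) (og := of)
        hD hxy hcross ⟨z_e, hze, heqe⟩ hof1 hof2 hof3 ?_
      intro t htZ
      rcases hout t htZ with h | h
      · exact Or.inl ((Set.ncard_le_one (Set.toFinite _)).1 hoe1 t h y hyoe)
      · exact Or.inr h
    · obtain ⟨_, z_f, hzf, heqf⟩ := hof2 y hyof
      refine endgameE htri (e := s(x,x)) (f := f) (g := e) (og := oe)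
        (fun z t h => by rcases h with hin | hin
                         · exact Or.inr (Or.inr hin)
                         · exact Or.inr (Or.inl hin))
        hxy hcross ⟨z_f, hzf, heqf⟩ hoe1 hoe2 hoe3 ?_
      intro t htZ
      rcases hout t htZ with h | h
      · exact Or.inr h
      · exact Or.inl ((Set.ncard_le_one (Set.toFinite _)).1 hof1 t h y hyof)

lemma starS_empty : starS (∅ : Set V) = ∅ := by
  ext ε
  simp [starS]

lemma cut_single_iff [Fintype V] {G : SimpleGraph V} {a : V} {E : Set (Sym2 V)}
    (hcard : 2 ≤ Fintype.card V) :
    CutVE G {a} E ↔ ∃ x y : V, x ≠ a ∧ y ≠ a ∧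
      ¬ (G.deleteEdges (E ∪ starS {a})).Reachable x y := by
  have hrw : (G.deleteEdges E).deleteEdges (starS {a}) = G.deleteEdges (E ∪ starS {a}) :=
    SimpleGraph.deleteEdges_deleteEdges E (starS {a})
  constructor
  · intro hcut
    have hne : Nonempty (({a}ᶜ : Set V)) := by
      obtain ⟨b, hb⟩ := Fintype.exists_ne_of_one_lt_card (by omega) a
      exact ⟨⟨b, fun h => hb h⟩⟩
    rw [CutVE, SimpleGraph.connected_iff] at hcut
    push_neg at hcut
    have hnp : ¬ (DelVE G {a} E).Preconnected := fun hp => (hcut hp).false hne.some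
    simp only [SimpleGraph.Preconnected] at hnp
    push_neg at hnp
    obtain ⟨u, v, huv⟩ := hnp
    refine ⟨u.1, v.1, fun h => u.2 h, fun h => v.2 h, ?_⟩
    intro hr
    rw [← hrw] at hr
    obtain ⟨hy', hri⟩ := reach_to_induce (H := G.deleteEdges E) (A := {a}) u.2 hr
    exact huv hri
  · rintro ⟨x, y, hx, hy, hr⟩ hconn
    have hre := hconn.preconnected ⟨x, fun h => hx h⟩ ⟨y, fun h => hy h⟩
    have hre' := reach_of_induce (H := G.deleteEdges E) (A := {a}) (fun h => hx h)
      (fun h => hy h) hre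
    rw [hrw] at hre'
    exact hr hre'

lemma cut_empty_iff [Fintype V] {G : SimpleGraph V} {E : Set (Sym2 V)}
    (hcard : 1 ≤ Fintype.card V) :
    CutVE G ∅ E ↔ ∃ x y : V, ¬ (G.deleteEdges E).Reachable x y := by
  have hrw : (G.deleteEdges E).deleteEdges (starS (∅ : Set V)) = G.deleteEdges E := by
    rw [starS_empty, SimpleGraph.deleteEdges_empty]
  constructor
  · intro hcut
    have hVne : Nonempty V := Fintype.card_pos_iff.1 (by omega)
    obtain ⟨w⟩ := hVne
    have hne : Nonempty ((∅ᶜ : Set V)) := ⟨⟨w, Set.notMem_empty w⟩⟩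
    rw [CutVE, SimpleGraph.connected_iff] at hcut
    push_neg at hcut
    have hnp : ¬ (DelVE G ∅ E).Preconnected := fun hp => (hcut hp).false hne.some
    simp only [SimpleGraph.Preconnected] at hnp
    push_neg at hnp
    obtain ⟨u, v, huv⟩ := hnp
    refine ⟨u.1, v.1, ?_⟩
    intro hr
    rw [← hrw] at hr
    obtain ⟨hy', hri⟩ := reach_to_induce (H := G.deleteEdges E) (A := (∅ : Set V)) u.2 hr
    exact huv hri
  · rintro ⟨x, y, hr⟩ hconn
    have hre := hconn.preconnected ⟨x, Set.notMem_empty x⟩ ⟨y, Set.notMem_empty y⟩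
    have hre' := reach_of_induce (H := G.deleteEdges E) (A := (∅ : Set V))
      (Set.notMem_empty x) (Set.notMem_empty y) hre
    rw [hrw] at hre'
    exact hr hre'

lemma shape [Fintype V] {A : Set V} {E : Set (Sym2 V)} {e f : Sym2 V}
    (hcard : A.ncard + E.ncard = 3) (he : e ∈ E) (hf : f ∈ E) (hef : e ≠ f) :
    (A = ∅ ∧ ∃ g, g ≠ e ∧ g ≠ f ∧ E = {e,f,g}) ∨ (∃ a, A = {a} ∧ E = {e,f}) := by
  classical
  have hsub : ({e,f} : Set (Sym2 V)) ⊆ E := by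
    rw [Set.insert_subset_iff]
    exact ⟨he, Set.singleton_subset_iff.2 hf⟩
  have hE2 : 2 ≤ E.ncard := by
    rw [← Set.ncard_pair hef]
    exact Set.ncard_le_ncard hsub (Set.toFinite _)
  rcases (by omega : E.ncard = 2 ∨ E.ncard = 3) with h2 | h3
  · right
    have hA1 : A.ncard = 1 := by omega
    obtain ⟨a, ha⟩ := Set.ncard_eq_one.1 hA1
    have hEeq : ({e,f} : Set (Sym2 V)) = E :=
      Set.eq_of_subset_of_ncard_le hsub (by rw [h2, Set.ncard_pair hef]) (Set.toFinite _)
    exact ⟨a, ha, hEeq.symm⟩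
  · left
    have hA0 : A.ncard = 0 := by omega
    have hA : A = ∅ := (Set.ncard_eq_zero (Set.toFinite _)).1 hA0
    have hg : ∃ g ∈ E, g ∉ ({e,f} : Set (Sym2 V)) := by
      by_contra hng
      push_neg at hng
      have hEs : E ⊆ ({e,f} : Set (Sym2 V)) := hng
      have := Set.ncard_le_ncard hEs (Set.toFinite _)
      rw [Set.ncard_pair hef] at this
      omega
    obtain ⟨g, hgE, hgef⟩ := hg
    have hge : g ≠ e := fun h => hgef (by rw [h]; exact Or.inl rfl)
    have hgf : g ≠ f := fun h => hgef (by rw [h]; exact Or.inr rfl)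
    have hsub3 : ({e,f,g} : Set (Sym2 V)) ⊆ E := by
      rw [Set.insert_subset_iff, Set.insert_subset_iff]
      exact ⟨he, hf, Set.singleton_subset_iff.2 hgE⟩
    have hfg : f ≠ g := fun h => hgf h.symm
    have hc3 : ({e,f,g} : Set (Sym2 V)).ncard = 3 := by
      rw [Set.ncard_insert_of_notMem (by
        rintro (h | h)
        · exact hef h
        · exact hge h.symm) (Set.toFinite _), Set.ncard_pair hfg]
    have hEeq := Set.eq_of_subset_of_ncard_le hsub3 (by omega) (Set.toFinite _)
    exact ⟨hA, g, hge, hgf, hEeq.symm⟩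

lemma case_VV [Fintype V] {G : SimpleGraph V} (htri : IsTriconnected G)
    {e f : Sym2 V} {a₁ a₂ : V} (ha : a₁ ≠ a₂)
    (hc1 : ∃ x y : V, x ≠ a₁ ∧ y ≠ a₁ ∧
      ¬ (G.deleteEdges (({e,f} : Set (Sym2 V)) ∪ starS {a₁})).Reachable x y)
    (hc2 : ∃ x y : V, x ≠ a₂ ∧ y ≠ a₂ ∧
      ¬ (G.deleteEdges (({e,f} : Set (Sym2 V)) ∪ starS {a₂})).Reachable x y) :
    ∃ b u v : V, G.Adj a₁ b ∧
      ¬ (G.deleteEdges (insert s(a₁,b) ({e,f} : Set (Sym2 V)))).Reachable u v := by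
  classical
  obtain ⟨x₁, y₁, hx1, hy1, hr1⟩ := hc1
  obtain ⟨x₂, y₂, hx2, hy2, hr2⟩ := hc2
  obtain ⟨e₁, e₂, f₁, f₂, hee, hff, h1, h2, h3, he1a, he2a, hf1a, hf2a, hcov1⟩ :=
    structV htri hx1 hy1 hr1
  obtain ⟨e₁', e₂', f₁', f₂', hee', hff', h1', h2', h3', he1a', he2a', hf1a', hf2a', hcov2⟩ :=
    structV htri hx2 hy2 hr2
  obtain ⟨p₁, _, hp₁K, hp₁⟩ := attach (D := ({e,f} : Set (Sym2 V))) he1a (K_conn htri e₁ a₁)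
  obtain ⟨q₁, _, hq₁K, hq₁⟩ := attach (D := ({e,f} : Set (Sym2 V))) he2a (K_conn htri e₂ a₁)
  have key : ∀ (H1' : ¬ (G.deleteEdges (({e,f} : Set (Sym2 V)) ∪ starS {a₂})).Reachable e₁ e₂)
      (Hpair' : ((G.deleteEdges (({e,f} : Set (Sym2 V)) ∪ starS {a₂})).Reachable e₁ f₁ ∧
          (G.deleteEdges (({e,f} : Set (Sym2 V)) ∪ starS {a₂})).Reachable e₂ f₂) ∨
        ((G.deleteEdges (({e,f} : Set (Sym2 V)) ∪ starS {a₂})).Reachable e₁ f₂ ∧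
          (G.deleteEdges (({e,f} : Set (Sym2 V)) ∪ starS {a₂})).Reachable e₂ f₁))
      (He1a2 : e₁ ≠ a₂) (He2a2 : e₂ ≠ a₂)
      (Hcov2 : ∀ w, w ≠ a₂ →
        (G.deleteEdges (({e,f} : Set (Sym2 V)) ∪ starS {a₂})).Reachable e₁ w ∨
        (G.deleteEdges (({e,f} : Set (Sym2 V)) ∪ starS {a₂})).Reachable e₂ w),
      ∃ b u v : V, G.Adj a₁ b ∧
        ¬ (G.deleteEdges (insert s(a₁,b) ({e,f} : Set (Sym2 V)))).Reachable u v := by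
    intro H1' Hpair' He1a2 He2a2 Hcov2
    obtain ⟨p₂, _, hp₂K, hp₂⟩ := attach (D := ({e,f} : Set (Sym2 V))) He1a2 (K_conn htri e₁ a₂)
    obtain ⟨q₂, _, hq₂K, hq₂⟩ := attach (D := ({e,f} : Set (Sym2 V))) He2a2 (K_conn htri e₂ a₂)
    rcases hcov1 a₂ (Ne.symm ha) with hor | hor
    · exact c_core htri ha hee hff h1 h3 he1a he2a hcov1 hp₁K hp₁ hq₁K hq₁ hp₂K hp₂
        H1' Hpair' He1a2 He2a2 Hcov2 hor
    · refine c_core htri ha (hee.trans Sym2.eq_swap) (hff.trans Sym2.eq_swap)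
        (fun h => h1 h.symm) h2 he2a he1a
        (fun w hw => (hcov1 w hw).symm)
        hq₁K hq₁ hp₁K hp₁ hq₂K hq₂
        (fun h => H1' h.symm) ?_ He2a2 He1a2
        (fun w hw => (Hcov2 w hw).symm) hor
      rcases Hpair' with ⟨u, v⟩ | ⟨u, v⟩
      · exact Or.inl ⟨v, u⟩
      · exact Or.inr ⟨v, u⟩
  have hme : s(e₁',e₂') = s(e₁,e₂) := hee'.symm.trans hee
  have hmf : s(f₁',f₂') = s(f₁,f₂) := hff'.symm.trans hff
  rcases Sym2.eq_iff.1 hme with ⟨hA, hB⟩ | ⟨hA, hB⟩ <;> subst hA <;> subst hB <;>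
    rcases Sym2.eq_iff.1 hmf with ⟨hC, hD⟩ | ⟨hC, hD⟩ <;> subst hC <;> subst hD
  · exact key h1' (Or.inl ⟨h2', h3'⟩) he1a' he2a' hcov2
  · exact key h1' (Or.inr ⟨h2', h3'⟩) he1a' he2a' hcov2
  · exact key (fun h => h1' h.symm) (Or.inr ⟨h3', h2'⟩) he2a' he1a'
      (fun w hw => (hcov2 w hw).symm)
  · exact key (fun h => h1' h.symm) (Or.inl ⟨h3', h2'⟩) he2a' he1a'
      (fun w hw => (hcov2 w hw).symm)

lemma case_VE [Fintype V] {G : SimpleGraph V} (htri : IsTriconnected G)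
    {e f g : Sym2 V} {a : V}
    (hge : g ≠ e) (hgf : g ≠ f) (hgE : g ∈ G.edgeSet)
    (hc1 : ∃ x y : V, x ≠ a ∧ y ≠ a ∧
      ¬ (G.deleteEdges (({e,f} : Set (Sym2 V)) ∪ starS {a})).Reachable x y)
    (hc2 : ∃ x y : V, ¬ (G.deleteEdges ({e,f,g} : Set (Sym2 V))).Reachable x y) :
    ∃ b : V, g = s(a, b) := by
  classical
  obtain ⟨x₁, y₁, hx1, hy1, hr1⟩ := hc1
  obtain ⟨x₂, y₂, hr2⟩ := hc2
  obtain ⟨e₁, e₂, f₁, f₂, hee, hff, h1, h2, h3, he1a, he2a, hf1a, hf2a, hcov1⟩ :=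
    structV htri hx1 hy1 hr1
  obtain ⟨p, _, hpK, hp⟩ := attach (D := ({e,f} : Set (Sym2 V))) he1a (K_conn htri e₁ a)
  obtain ⟨q, _, hqK, hq⟩ := attach (D := ({e,f} : Set (Sym2 V))) he2a (K_conn htri e₂ a)
  obtain ⟨e₁', e₂', f₁', f₂', gp, gq, hee', hff', hgg, h1E', h2E', h3E', hg1E', hg2E', hcovE'⟩ :=
    structE htri hge hgf hgE (fun u w => K_conn htri u w) hr2
  have key : ∀ (H1E : ¬ (G.deleteEdges ({e,f,g} : Set (Sym2 V))).Reachable e₁ e₂)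
      (HpairE : ((G.deleteEdges ({e,f,g} : Set (Sym2 V))).Reachable e₁ f₁ ∧
          (G.deleteEdges ({e,f,g} : Set (Sym2 V))).Reachable e₂ f₂) ∨
        ((G.deleteEdges ({e,f,g} : Set (Sym2 V))).Reachable e₁ f₂ ∧
          (G.deleteEdges ({e,f,g} : Set (Sym2 V))).Reachable e₂ f₁))
      (Hgor : ((G.deleteEdges ({e,f,g} : Set (Sym2 V))).Reachable e₁ gp ∧
          (G.deleteEdges ({e,f,g} : Set (Sym2 V))).Reachable e₂ gq) ∨
        ((G.deleteEdges ({e,f,g} : Set (Sym2 V))).Reachable e₁ gq ∧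
          (G.deleteEdges ({e,f,g} : Set (Sym2 V))).Reachable e₂ gp))
      (HcovE : ∀ w, (G.deleteEdges ({e,f,g} : Set (Sym2 V))).Reachable e₁ w ∨
        (G.deleteEdges ({e,f,g} : Set (Sym2 V))).Reachable e₂ w),
      ∃ b : V, g = s(a, b) := by
    intro H1E HpairE Hgor HcovE
    have finishQ : ((gp = a ∨ (G.deleteEdges (({e,f} : Set (Sym2 V)) ∪ starS {a})).Reachable e₂ gp) ∧
        (gq = a ∨ (G.deleteEdges (({e,f} : Set (Sym2 V)) ∪ starS {a})).Reachable e₂ gq)) →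
        ∃ b : V, g = s(a, b) := by
      intro hloc
      obtain ⟨b, hb, _⟩ := b_core htri hee hff hgg h1 h2 h3 he1a he2a hcov1 hpK hp
        H1E HpairE Hgor HcovE hloc
      exact ⟨b, hb⟩
    have finishP : ((gp = a ∨ (G.deleteEdges (({e,f} : Set (Sym2 V)) ∪ starS {a})).Reachable e₁ gp) ∧
        (gq = a ∨ (G.deleteEdges (({e,f} : Set (Sym2 V)) ∪ starS {a})).Reachable e₁ gq)) →
        ∃ b : V, g = s(a, b) := by
      intro hloc
      have HpairE' : ((G.deleteEdges ({e,f,g} : Set (Sym2 V))).Reachable e₂ f₂ ∧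
          (G.deleteEdges ({e,f,g} : Set (Sym2 V))).Reachable e₁ f₁) ∨
        ((G.deleteEdges ({e,f,g} : Set (Sym2 V))).Reachable e₂ f₁ ∧
          (G.deleteEdges ({e,f,g} : Set (Sym2 V))).Reachable e₁ f₂) := by
        rcases HpairE with ⟨u, v⟩ | ⟨u, v⟩
        · exact Or.inl ⟨v, u⟩
        · exact Or.inr ⟨v, u⟩
      have Hgor' : ((G.deleteEdges ({e,f,g} : Set (Sym2 V))).Reachable e₂ gp ∧
          (G.deleteEdges ({e,f,g} : Set (Sym2 V))).Reachable e₁ gq) ∨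
        ((G.deleteEdges ({e,f,g} : Set (Sym2 V))).Reachable e₂ gq ∧
          (G.deleteEdges ({e,f,g} : Set (Sym2 V))).Reachable e₁ gp) := by
        rcases Hgor with ⟨u, v⟩ | ⟨u, v⟩
        · exact Or.inr ⟨v, u⟩
        · exact Or.inl ⟨v, u⟩
      obtain ⟨b, hb, _⟩ := b_core htri (hee.trans Sym2.eq_swap) (hff.trans Sym2.eq_swap) hgg
        (fun h => h1 h.symm) h3 h2 he2a he1a (fun w hw => (hcov1 w hw).symm) hqK hq
        (fun h => H1E h.symm) HpairE' Hgor' (fun w => (HcovE w).symm) hloc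
      exact ⟨b, hb⟩
    by_cases hgpa : gp = a
    · by_cases hgqa : gq = a
      · exact finishQ ⟨Or.inl hgpa, Or.inl hgqa⟩
      · rcases hcov1 gq hgqa with hq1 | hq1
        · exact finishP ⟨Or.inl hgpa, Or.inr hq1⟩
        · exact finishQ ⟨Or.inl hgpa, Or.inr hq1⟩
    · by_cases hgqa : gq = a
      · rcases hcov1 gp hgpa with hp1 | hp1
        · exact finishP ⟨Or.inr hp1, Or.inl hgqa⟩
        · exact finishQ ⟨Or.inr hp1, Or.inl hgqa⟩
      · have hadj : (G.deleteEdges (({e,f} : Set (Sym2 V)) ∪ starS {a})).Adj gp gq := by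
          refine SimpleGraph.deleteEdges_adj.2 ⟨?_, ?_⟩
          · exact (SimpleGraph.mem_edgeSet G).1 (hgg ▸ hgE)
          · rintro (hin | hin)
            · rcases hin with hin | hin
              · exact hge (hgg.trans hin)
              · exact hgf (hgg.trans hin)
            · rcases mem_starS.1 hin with h' | h'
              · exact hgpa h'
              · exact hgqa h'
        rcases hcov1 gp hgpa with hp1 | hp1
        · exact finishP ⟨Or.inr hp1, Or.inr (hp1.trans hadj.reachable)⟩
        · exact finishQ ⟨Or.inr hp1, Or.inr (hp1.trans hadj.reachable)⟩
  have hme : s(e₁',e₂') = s(e₁,e₂) := hee'.symm.trans hee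
  have hmf : s(f₁',f₂') = s(f₁,f₂) := hff'.symm.trans hff
  rcases Sym2.eq_iff.1 hme with ⟨hA, hB⟩ | ⟨hA, hB⟩ <;> subst hA <;> subst hB <;>
    rcases Sym2.eq_iff.1 hmf with ⟨hC, hD⟩ | ⟨hC, hD⟩ <;> subst hC <;> subst hD
  · exact key h1E' (Or.inl ⟨h2E', h3E'⟩) (Or.inl ⟨hg1E', hg2E'⟩) hcovE'
  · exact key h1E' (Or.inr ⟨h2E', h3E'⟩) (Or.inl ⟨hg1E', hg2E'⟩) hcovE'
  · exact key (fun h => h1E' h.symm) (Or.inr ⟨h3E', h2E'⟩) (Or.inr ⟨hg2E', hg1E'⟩)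
      (fun w => (hcovE' w).symm)
  · exact key (fun h => h1E' h.symm) (Or.inl ⟨h3E', h2E'⟩) (Or.inr ⟨hg2E', hg1E'⟩)
      (fun w => (hcovE' w).symm)

lemma case_EE [Fintype V] {G : SimpleGraph V} (htri : IsTriconnected G)
    {e f g h : Sym2 V}
    (hef : e ≠ f) (hge : g ≠ e) (hgf : g ≠ f) (hhe : h ≠ e) (hhf : h ≠ f) (hgh : g ≠ h)
    (hgE : g ∈ G.edgeSet) (hhE : h ∈ G.edgeSet)
    (hc1 : ∃ x y : V, ¬ (G.deleteEdges ({e,f,g} : Set (Sym2 V))).Reachable x y)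
    (hc2 : ∃ x y : V, ¬ (G.deleteEdges ({e,f,h} : Set (Sym2 V))).Reachable x y) : False := by
  classical
  obtain ⟨x₁, y₁, hr1⟩ := hc1
  obtain ⟨x₂, y₂, hr2⟩ := hc2
  obtain ⟨e₁, e₂, f₁, f₂, g₁, g₂, hee, hff, hgg, h1g, h2g, h3g, hg1, hg2, hcovg⟩ :=
    structE htri hge hgf hgE (fun u w => K_conn htri u w) hr1
  obtain ⟨e₁', e₂', f₁', f₂', hp, hq, hee', hff', hhh, h1h', h2h', h3h', hh1', hh2', hcovh'⟩ :=
    structE htri hhe hhf hhE (fun u w => K_conn htri u w) hr2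
  have key : ∀ (H1h : ¬ (G.deleteEdges ({e,f,h} : Set (Sym2 V))).Reachable e₁ e₂)
      (HpairH : ((G.deleteEdges ({e,f,h} : Set (Sym2 V))).Reachable e₁ f₁ ∧
          (G.deleteEdges ({e,f,h} : Set (Sym2 V))).Reachable e₂ f₂) ∨
        ((G.deleteEdges ({e,f,h} : Set (Sym2 V))).Reachable e₁ f₂ ∧
          (G.deleteEdges ({e,f,h} : Set (Sym2 V))).Reachable e₂ f₁))
      (Hhor : ((G.deleteEdges ({e,f,h} : Set (Sym2 V))).Reachable e₁ hp ∧
          (G.deleteEdges ({e,f,h} : Set (Sym2 V))).Reachable e₂ hq) ∨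
        ((G.deleteEdges ({e,f,h} : Set (Sym2 V))).Reachable e₁ hq ∧
          (G.deleteEdges ({e,f,h} : Set (Sym2 V))).Reachable e₂ hp))
      (HcovH : ∀ w, (G.deleteEdges ({e,f,h} : Set (Sym2 V))).Reachable e₁ w ∨
        (G.deleteEdges ({e,f,h} : Set (Sym2 V))).Reachable e₂ w), False := by
    intro H1h HpairH Hhor HcovH
    have hadjg : (G.deleteEdges ({e,f,g} : Set (Sym2 V))).Adj hp hq := by
      refine SimpleGraph.deleteEdges_adj.2 ⟨?_, ?_⟩
      · exact (SimpleGraph.mem_edgeSet G).1 (hhh ▸ hhE)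
      · rintro (hin | hin | hin)
        · exact hhe (hhh.trans hin)
        · exact hhf (hhh.trans hin)
        · exact hgh ((hhh.trans hin).symm)
    rcases hcovg hp with hside | hside
    · -- hp (and hq) in the e₁-side : use swapped a_core
      have Hpair' : ((G.deleteEdges ({e,f,h} : Set (Sym2 V))).Reachable e₂ f₂ ∧
          (G.deleteEdges ({e,f,h} : Set (Sym2 V))).Reachable e₁ f₁) ∨
        ((G.deleteEdges ({e,f,h} : Set (Sym2 V))).Reachable e₂ f₁ ∧
          (G.deleteEdges ({e,f,h} : Set (Sym2 V))).Reachable e₁ f₂) := by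
        rcases HpairH with ⟨u, v⟩ | ⟨u, v⟩
        · exact Or.inl ⟨v, u⟩
        · exact Or.inr ⟨v, u⟩
      have Hhor' : ((G.deleteEdges ({e,f,h} : Set (Sym2 V))).Reachable e₂ hp ∧
          (G.deleteEdges ({e,f,h} : Set (Sym2 V))).Reachable e₁ hq) ∨
        ((G.deleteEdges ({e,f,h} : Set (Sym2 V))).Reachable e₂ hq ∧
          (G.deleteEdges ({e,f,h} : Set (Sym2 V))).Reachable e₁ hp) := by
        rcases Hhor with ⟨u, v⟩ | ⟨u, v⟩
        · exact Or.inr ⟨v, u⟩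
        · exact Or.inl ⟨v, u⟩
      exact a_core htri hef hge hgf hgh hgE (hee.trans Sym2.eq_swap)
        (hff.trans Sym2.eq_swap) (hgg.trans Sym2.eq_swap) hhh
        (fun h' => h1g h'.symm) h3g h2g hg2 hg1
        (fun h' => H1h h'.symm) Hpair' Hhor' (fun w => (HcovH w).symm)
        ⟨hside, hside.trans hadjg.reachable⟩
    · exact a_core htri hef hge hgf hgh hgE hee hff hgg hhh h1g h2g h3g hg1 hg2
        H1h HpairH Hhor HcovH ⟨hside, hside.trans hadjg.reachable⟩
  have hme : s(e₁',e₂') = s(e₁,e₂) := hee'.symm.trans hee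
  have hmf : s(f₁',f₂') = s(f₁,f₂) := hff'.symm.trans hff
  rcases Sym2.eq_iff.1 hme with ⟨hA, hB⟩ | ⟨hA, hB⟩ <;> subst hA <;> subst hB <;>
    rcases Sym2.eq_iff.1 hmf with ⟨hC, hD⟩ | ⟨hC, hD⟩ <;> subst hC <;> subst hD
  · exact key h1h' (Or.inl ⟨h2h', h3h'⟩) (Or.inl ⟨hh1', hh2'⟩) hcovh'
  · exact key h1h' (Or.inr ⟨h2h', h3h'⟩) (Or.inl ⟨hh1', hh2'⟩) hcovh'
  · exact key (fun h' => h1h' h'.symm) (Or.inr ⟨h3h', h2h'⟩) (Or.inr ⟨hh2', hh1'⟩)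
      (fun w => (hcovh' w).symm)
  · exact key (fun h' => h1h' h'.symm) (Or.inl ⟨h3h', h2h'⟩) (Or.inr ⟨hh2', hh1'⟩)
      (fun w => (hcovh' w).symm)

/-- Corollary `ll32c1`: two distinct cuts sharing at least two edges cannot both
be maximal. -/
theorem stmt_8 [Fintype V] (G : SimpleGraph V)
    (htri : IsTriconnected G) (hbig : 6 < Fintype.card V)
    (A₁ A₂ : Set V) (E₁ E₂ : Set (Sym2 V))
    (hcard₁ : A₁.ncard + E₁.ncard = 3) (hE₁sub : E₁ ⊆ G.edgeSet)
    (hE₁ne : E₁.Nonempty) (hcut₁ : CutVE G A₁ E₁)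
    (hcard₂ : A₂.ncard + E₂.ncard = 3) (hE₂sub : E₂ ⊆ G.edgeSet)
    (hE₂ne : E₂.Nonempty) (hcut₂ : CutVE G A₂ E₂)
    (hne : A₁ ≠ A₂ ∨ E₁ ≠ E₂)
    (hcommon : ∃ e f : Sym2 V, e ≠ f ∧ e ∈ E₁ ∧ e ∈ E₂ ∧ f ∈ E₁ ∧ f ∈ E₂) :
    CanComplement G A₁ E₁ ∨ CanComplement G A₂ E₂ := by
  classical
  obtain ⟨e, f, hef, heE1, heE2, hfE1, hfE2⟩ := hcommon
  have hc2' : 2 ≤ Fintype.card V := by omega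
  have hc1' : 1 ≤ Fintype.card V := by omega
  rcases shape hcard₁ heE1 hfE1 hef with ⟨hA1, g, hge, hgf, hE1⟩ | ⟨a₁, hA1, hE1⟩
  · rcases shape hcard₂ heE2 hfE2 hef with ⟨hA2, h, hhe, hhf, hE2⟩ | ⟨a₂, hA2, hE2⟩
    · -- edge–edge : impossible
      exfalso
      have hgh : g ≠ h := by
        intro hgh'
        rcases hne with hA | hE
        · exact hA (hA1.trans hA2.symm)
        · exact hE (hE1.trans (by rw [hgh']; exact hE2.symm))
      have hgE : g ∈ G.edgeSet := hE₁sub (by rw [hE1]; exact Or.inr (Or.inr rfl))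
      have hhE : h ∈ G.edgeSet := hE₂sub (by rw [hE2]; exact Or.inr (Or.inr rfl))
      rw [hA1, hE1] at hcut₁
      rw [hA2, hE2] at hcut₂
      exact case_EE htri hef hge hgf hhe hhf hgh hgE hhE
        ((cut_empty_iff hc1').1 hcut₁) ((cut_empty_iff hc1').1 hcut₂)
    · -- E₁ edge cut, M₂ vertex cut : complement M₂
      have hgE : g ∈ G.edgeSet := hE₁sub (by rw [hE1]; exact Or.inr (Or.inr rfl))
      rw [hA1, hE1] at hcut₁
      rw [hA2, hE2] at hcut₂
      obtain ⟨b, hgab⟩ := case_VE htri hge hgf hgE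
        ((cut_single_iff hc2').1 hcut₂) ((cut_empty_iff hc1').1 hcut₁)
      refine Or.inr ⟨a₂, by rw [hA2]; exact rfl, b,
        (SimpleGraph.mem_edgeSet G).1 (hgab ▸ hgE), ?_⟩
      rw [hA2, hE2, Set.diff_self]
      have hset : insert s(a₂,b) ({e,f} : Set (Sym2 V)) = ({e,f,g} : Set (Sym2 V)) := by
        ext z
        simp only [Set.mem_insert_iff, Set.mem_singleton_iff, hgab]
        tauto
      rw [hset]
      exact hcut₁
  · rcases shape hcard₂ heE2 hfE2 hef with ⟨hA2, h, hhe, hhf, hE2⟩ | ⟨a₂, hA2, hE2⟩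
    · -- M₁ vertex cut, E₂ edge cut : complement M₁
      have hhE : h ∈ G.edgeSet := hE₂sub (by rw [hE2]; exact Or.inr (Or.inr rfl))
      rw [hA1, hE1] at hcut₁
      rw [hA2, hE2] at hcut₂
      obtain ⟨b, hhab⟩ := case_VE htri hhe hhf hhE
        ((cut_single_iff hc2').1 hcut₁) ((cut_empty_iff hc1').1 hcut₂)
      refine Or.inl ⟨a₁, by rw [hA1]; exact rfl, b,
        (SimpleGraph.mem_edgeSet G).1 (hhab ▸ hhE), ?_⟩
      rw [hA1, hE1, Set.diff_self]
      have hset : insert s(a₁,b) ({e,f} : Set (Sym2 V)) = ({e,f,h} : Set (Sym2 V)) := by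
        ext z
        simp only [Set.mem_insert_iff, Set.mem_singleton_iff, hhab]
        tauto
      rw [hset]
      exact hcut₂
    · -- vertex–vertex
      have ha : a₁ ≠ a₂ := by
        intro h'
        rcases hne with hA | hE
        · exact hA (by rw [hA1, hA2, h'])
        · exact hE (hE1.trans hE2.symm)
      rw [hA1, hE1] at hcut₁
      rw [hA2, hE2] at hcut₂
      obtain ⟨b, u, v, hadj, hncut⟩ := case_VV htri ha
        ((cut_single_iff hc2').1 hcut₁) ((cut_single_iff hc2').1 hcut₂)
      refine Or.inl ⟨a₁, by rw [hA1]; exact rfl, b, hadj, ?_⟩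
      rw [hA1, hE1, Set.diff_self]
      exact (cut_empty_iff hc1').2 ⟨u, v, hncut⟩


end Paper
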